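/- arXiv:0705.0518 — 7 statements merged into one kernel-verified Lean document; each statement's English description precedes it below -/
import Mathlib

section
/- The matrices A, A*, A^ε satisfy the cyclic commutation relations: AA* − A*A = 2iA^ε, A*A^ε − A^εA* = 2iA, and A^εA − AA^ε = 2iA*. -/
noncomputable section

open Matrix Finset

/-- Vertex set of the hypercube `Q_D`: binary strings of length `D`. -/
abbrev Vtx (D : ℕ) := Fin D → Bool

/-- Hamming weight of a vertex, i.e. its distance to the fixed vertex `x = (0,...,0)`. -/
def wt {D : ℕ} (y : Vtx D) : ℕ := (Finset.univ.filter fun k => y k = true).card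

/-- The adjacency matrix of the hypercube `Q_D`: `A_{yz} = 1` iff `y,z` differ in exactly
one coordinate. -/
def adjMat (D : ℕ) : Matrix (Vtx D) (Vtx D) ℂ :=
  fun y z => if (Finset.univ.filter fun k => y k ≠ z k).card = 1 then 1 else 0

/-- The dual adjacency matrix of `Q_D` with respect to `x = (0,...,0)`: the diagonal
matrix with `(y,y)`-entry `D - 2·wt(y)`. -/
def dualAdjMat (D : ℕ) : Matrix (Vtx D) (Vtx D) ℂ :=
  Matrix.diagonal fun y => (D : ℂ) - 2 * (wt y : ℂ)

/-- The imaginary adjacency matrix `Aᵉ = -i(AA* - A*A)/2`. -/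
def imagAdjMat (D : ℕ) : Matrix (Vtx D) (Vtx D) ℂ :=
  (-Complex.I / 2) • (adjMat D * dualAdjMat D - dualAdjMat D * adjMat D)

/-- The 2×2 matrix `P₁` with entries `(P₁)₀₀ = 1`, `(P₁)₀₁ = 1`, `(P₁)₁₀ = -i`,
`(P₁)₁₁ = i`. -/
def P1 : Bool → Bool → ℂ
  | false, false => 1
  | false, true  => 1
  | true,  false => -Complex.I
  | true,  true  => Complex.I

/-- The D-fold Kronecker power `P = P₁^{⊗D}`, i.e. `P_{yz} = ∏_k (P₁)_{y_k z_k}`. -/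
def Pmat (D : ℕ) : Matrix (Vtx D) (Vtx D) ℂ :=
  fun y z => ∏ k : Fin D, P1 (y k) (z k)

/-- The eigenvalues `θ_j = D - 2j`. -/
def theta (D j : ℕ) : ℂ := (D : ℂ) - 2 * (j : ℂ)

/-- The `i`-th primitive idempotent `E_i = ∏_{0 ≤ j ≤ D, j ≠ i} (A - θ_j I)/(θ_i - θ_j)`. -/
def Emat (D i : ℕ) : Matrix (Vtx D) (Vtx D) ℂ :=
  Polynomial.aeval (adjMat D)
    (∏ j ∈ (Finset.range (D + 1)).erase i,
      Polynomial.C ((theta D i - theta D j)⁻¹) * (Polynomial.X - Polynomial.C (theta D j)))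

/-- The `i`-th dual idempotent `E*_i`: diagonal with `(y,y)`-entry `1` if `wt(y) = i`. -/
def EstarMat (D i : ℕ) : Matrix (Vtx D) (Vtx D) ℂ :=
  Matrix.diagonal fun y => if wt y = i then 1 else 0

/-- The `i`-th imaginary idempotent `Eᵉ_i = P⁻¹ E_i P`. -/
def EepsMat (D i : ℕ) : Matrix (Vtx D) (Vtx D) ℂ :=
  (Pmat D)⁻¹ * Emat D i * Pmat D

/-- `W` is a `T`-module: a subspace of `ℂ^X` invariant under `A` and `A*`. -/
def IsTMod (D : ℕ) (W : Submodule ℂ (Vtx D → ℂ)) : Prop :=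
  (∀ w ∈ W, (adjMat D).mulVec w ∈ W) ∧ (∀ w ∈ W, (dualAdjMat D).mulVec w ∈ W)

/-- `W` is an irreducible `T`-module. -/
def IsIrredTMod (D : ℕ) (W : Submodule ℂ (Vtx D → ℂ)) : Prop :=
  IsTMod D W ∧ W ≠ ⊥ ∧
    ∀ U : Submodule ℂ (Vtx D → ℂ), IsTMod D U → U ≤ W → U = ⊥ ∨ U = W

/-- The Hermitian inner product `⟨u,v⟩ = uᵗ · conj v` (linear in the first argument). -/
def inp {D : ℕ} (u v : Vtx D → ℂ) : ℂ := ∑ y, u y * (starRingEnd ℂ) (v y)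

namespace CycAux

variable {D : ℕ}

/-- Flip coordinate `k`. -/
def flp (y : Vtx D) (k : Fin D) : Vtx D := fun m => if m = k then !(y k) else y m

lemma wt_flp_true {y : Vtx D} {k : Fin D} (h : y k = true) : wt y = wt (flp y k) + 1 := by
  have hk : k ∉ Finset.univ.filter (fun m => flp y k m = true) := by simp [flp, h]
  have he : Finset.univ.filter (fun m => y m = true)
      = insert k (Finset.univ.filter fun m => flp y k m = true) := by
    ext m
    by_cases hm : m = k
    · subst hm; simp [h, flp]
    · simp [flp, hm]
  rw [wt, wt, he, Finset.card_insert_of_notMem hk]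

lemma wt_flp_false {y : Vtx D} {k : Fin D} (h : y k = false) : wt (flp y k) = wt y + 1 := by
  have hk : k ∉ Finset.univ.filter (fun m => y m = true) := by simp [h]
  have he : Finset.univ.filter (fun m => flp y k m = true)
      = insert k (Finset.univ.filter fun m => y m = true) := by
    ext m
    by_cases hm : m = k
    · subst hm; simp [h, flp]
    · simp [flp, hm]
  rw [wt, wt, he, Finset.card_insert_of_notMem hk]

lemma wt_flp_c (y : Vtx D) (k : Fin D) :
    (wt (flp y k) : ℂ) = (wt y : ℂ) + (if y k = true then -1 else 1) := by
  cases h : y k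
  · rw [wt_flp_false h]; push_cast; simp
  · have h2 : (wt y : ℂ) = (wt (flp y k) : ℂ) + 1 := by exact_mod_cast congrArg Nat.cast (wt_flp_true h)
    simp only [h, eq_self_iff_true, if_true]
    linear_combination -h2

lemma filter_flp_eq (y z : Vtx D) (k : Fin D) :
    Finset.univ.filter (fun m => flp y k m ≠ z m) =
      if y k = z k then insert k (Finset.univ.filter fun m => y m ≠ z m)
      else (Finset.univ.filter fun m => y m ≠ z m).erase k := by
  by_cases h : y k = z k
  · rw [if_pos h]
    ext m
    by_cases hm : m = k
    · subst hm
      cases hy : y m <;> simp_all [flp]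
    · rw [Finset.mem_filter]; simp [flp, hm]
  · rw [if_neg h]
    ext m
    by_cases hm : m = k
    · subst hm
      cases hy : y m <;> cases hz : z m <;> simp_all [flp]
    · rw [Finset.mem_filter]; simp [flp, hm]

lemma card_diff_eq_one_iff (y z : Vtx D) :
    (Finset.univ.filter fun m => y m ≠ z m).card = 1 ↔ ∃ k, z = flp y k := by
  constructor
  · intro h
    obtain ⟨k, hk⟩ := Finset.card_eq_one.mp h
    refine ⟨k, funext fun m => ?_⟩
    by_cases hm : m = k
    · subst hm
      have : m ∈ Finset.univ.filter fun j => y j ≠ z j := hk ▸ Finset.mem_singleton_self m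
      simp only [Finset.mem_filter] at this
      cases hy : y m <;> simp_all [flp]
    · have : m ∉ Finset.univ.filter fun j => y j ≠ z j := by
        rw [hk]; simpa using hm
      simp only [Finset.mem_filter, Finset.mem_univ, true_and, not_not] at this
      simp [flp, hm, this.symm]  -- z m = y m
  · rintro ⟨k, rfl⟩
    have : (Finset.univ.filter fun m => y m ≠ flp y k m) = {k} := by
      ext m
      by_cases hm : m = k
      · subst hm; cases hy : y m <;> simp [flp, hy]
      · simp [flp, hm]
    rw [this, Finset.card_singleton]

lemma flp_injective (y : Vtx D) : Function.Injective (flp y) := by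
  intro j k h
  by_contra hjk
  have := congrFun h j
  simp [flp, hjk] at this

lemma sum_adj (y : Vtx D) (g : Vtx D → ℂ) :
    ∑ w, adjMat D y w * g w = ∑ k, g (flp y k) := by
  have h1 : ∀ w, adjMat D y w * g w = if w ∈ Finset.image (flp y) Finset.univ then g w else 0 := by
    intro w
    rw [adjMat]
    by_cases h : (Finset.univ.filter fun m => y m ≠ w m).card = 1
    · obtain ⟨k, rfl⟩ := (card_diff_eq_one_iff y w).mp h
      rw [if_pos h, if_pos (Finset.mem_image_of_mem _ (Finset.mem_univ k)), one_mul]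
    · rw [if_neg h, if_neg, zero_mul]
      intro hc
      obtain ⟨k, _, rfl⟩ := Finset.mem_image.mp hc
      exact h ((card_diff_eq_one_iff y _).mpr ⟨k, rfl⟩)
  simp_rw [h1]
  rw [Finset.sum_ite_mem, Finset.univ_inter, Finset.sum_image (fun a _ b _ h => flp_injective y h)]


def dd (D : ℕ) (y : Vtx D) : ℂ := (D : ℂ) - 2 * (wt y : ℂ)

lemma imag_apply (y z : Vtx D) :
    imagAdjMat D y z = (-Complex.I/2) * (adjMat D y z * (dd D z - dd D y)) := by
  simp only [imagAdjMat, Matrix.smul_apply, Matrix.sub_apply, dualAdjMat,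
    Matrix.mul_diagonal, Matrix.diagonal_mul, smul_eq_mul, dd]
  ring

lemma flp_flp (y : Vtx D) (k : Fin D) : flp (flp y k) k = y := by
  funext m
  by_cases hm : m = k
  · subst hm; simp [flp]
  · simp [flp, hm]

lemma rel1 : adjMat D * dualAdjMat D - dualAdjMat D * adjMat D
    = (2 * Complex.I) • imagAdjMat D := by
  rw [imagAdjMat, smul_smul]
  have h : (2 * Complex.I) * (-Complex.I/2) = 1 := by
    linear_combination -Complex.I_mul_I
  rw [h, one_smul]

lemma rel2 : dualAdjMat D * imagAdjMat D - imagAdjMat D * dualAdjMat D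
    = (2 * Complex.I) • adjMat D := by
  ext y z
  simp only [Matrix.sub_apply, Matrix.smul_apply, dualAdjMat, Matrix.diagonal_mul,
    Matrix.mul_diagonal, imag_apply, smul_eq_mul]
  by_cases h : (Finset.univ.filter fun m => y m ≠ z m).card = 1
  · have hA : adjMat D y z = 1 := by rw [adjMat, if_pos h]
    obtain ⟨k, rfl⟩ := (card_diff_eq_one_iff y z).mp h
    have hwt := wt_flp_c y k
    rw [hA]
    simp only [dd]
    cases hk : y k <;> rw [hk] at hwt <;> simp only [Bool.false_eq_true, if_false,
      eq_self_iff_true, if_true] at hwt <;> rw [hwt] <;> ring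
  · have hA : adjMat D y z = 0 := by rw [adjMat, if_neg h]
    rw [hA]; ring

lemma adj_flp_self (y : Vtx D) (k : Fin D) : adjMat D (flp y k) y = 1 := by
  rw [adjMat, if_pos]
  exact (card_diff_eq_one_iff (flp y k) y).mpr ⟨k, (flp_flp y k).symm⟩

lemma rel3 : imagAdjMat D * adjMat D - adjMat D * imagAdjMat D
    = (2 * Complex.I) • dualAdjMat D := by
  ext y z
  have hL : (imagAdjMat D * adjMat D) y z
      = ∑ k, (-Complex.I/2) * (dd D (flp y k) - dd D y) * adjMat D (flp y k) z := by
    rw [Matrix.mul_apply]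
    have : ∀ w, imagAdjMat D y w * adjMat D w z
        = adjMat D y w * ((-Complex.I/2) * (dd D w - dd D y) * adjMat D w z) := by
      intro w; rw [imag_apply]; ring
    simp_rw [this]
    exact sum_adj y _
  have hR : (adjMat D * imagAdjMat D) y z
      = ∑ k, adjMat D (flp y k) z * ((-Complex.I/2) * (dd D z - dd D (flp y k))) := by
    rw [Matrix.mul_apply]
    have : ∀ w, adjMat D y w * imagAdjMat D w z
        = adjMat D y w * (adjMat D w z * ((-Complex.I/2) * (dd D z - dd D w))) := by
      intro w; rw [imag_apply]; ring
    simp_rw [this]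
    exact sum_adj y _
  rw [Matrix.sub_apply, hL, hR, ← Finset.sum_sub_distrib, Matrix.smul_apply, dualAdjMat,
    Matrix.diagonal_apply, smul_eq_mul]
  by_cases hyz : y = z
  · subst hyz
    rw [if_pos rfl]
    have hterm : ∀ k : Fin D,
        (-Complex.I/2) * (dd D (flp y k) - dd D y) * adjMat D (flp y k) y
          - adjMat D (flp y k) y * ((-Complex.I/2) * (dd D y - dd D (flp y k)))
        = if y k = true then (-2) * Complex.I else 2 * Complex.I := by
      intro k
      rw [adj_flp_self]
      have hwt := wt_flp_c y k
      simp only [dd]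
      cases hk : y k <;> rw [hk] at hwt <;>
        simp only [Bool.false_eq_true, if_false, eq_self_iff_true, if_true] at hwt ⊢ <;>
        rw [hwt] <;> ring
    rw [Finset.sum_congr rfl fun k _ => hterm k, Finset.sum_ite, Finset.sum_const,
      Finset.sum_const, nsmul_eq_mul, nsmul_eq_mul]
    have hcards := Finset.card_filter_add_card_filter_not
      (s := (Finset.univ : Finset (Fin D))) (p := fun k => y k = true)
    rw [Finset.card_univ, Fintype.card_fin] at hcards
    have hw : ((Finset.univ.filter fun k => y k = true).card : ℂ) = (wt y : ℂ) := by
      rw [wt]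
    have hnc : ((Finset.univ.filter fun k => ¬ y k = true).card : ℂ)
        = (D : ℂ) - (wt y : ℂ) := by
      have : ((Finset.univ.filter fun k => y k = true).card : ℂ)
          + ((Finset.univ.filter fun k => ¬ y k = true).card : ℂ) = (D : ℂ) := by
        exact_mod_cast congrArg Nat.cast hcards
      rw [hw] at this
      linear_combination this
    rw [hw, hnc]
    ring
  · rw [if_neg hyz, mul_zero]
    by_cases hc : (Finset.univ.filter fun m => y m ≠ z m).card = 2
    · obtain ⟨j, k, hjk, hS⟩ := Finset.card_eq_two.mp hc
      have hmem : ∀ m : Fin D, (y m ≠ z m) ↔ (m = j ∨ m = k) := by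
        intro m
        constructor
        · intro hm
          have : m ∈ (Finset.univ.filter fun m => y m ≠ z m) := by simp [hm]
          rw [hS] at this
          simpa using this
        · intro hm
          have : m ∈ ({j, k} : Finset (Fin D)) := by simpa using hm
          rw [← hS] at this
          simp only [Finset.mem_filter] at this
          exact this.2
      have hAone : ∀ m, m = j ∨ m = k → adjMat D (flp y m) z = 1 := by
        intro m hm
        rw [adjMat, if_pos]
        rw [filter_flp_eq]
        have hymzm : ¬ (y m = z m) := by
          intro hcon
          exact ((hmem m).mpr hm) hcon
        rw [if_neg hymzm, hS]
        rcases hm with rfl | rfl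
        · rw [Finset.erase_insert (by simpa using hjk)]
          exact Finset.card_singleton k
        · rw [Finset.pair_comm, Finset.erase_insert (by simpa using hjk.symm)]
          exact Finset.card_singleton j
      have hAzero : ∀ m : Fin D, m ∉ ({j, k} : Finset (Fin D)) → adjMat D (flp y m) z = 0 := by
        intro m hm
        rw [adjMat, if_neg]
        rw [filter_flp_eq]
        have hym : y m = z m := by
          by_contra hcon
          exact hm (by simpa using (hmem m).mp hcon)
        rw [if_pos hym, Finset.card_insert_of_notMem (by rw [hS]; exact hm)]
        omega
      rw [← Finset.sum_subset (Finset.subset_univ ({j, k} : Finset (Fin D)))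
        (fun m _ hm => by rw [hAzero m hm]; ring)]
      rw [Finset.sum_pair hjk, hAone j (Or.inl rfl), hAone k (Or.inr rfl)]
      have hkj : ¬ (k = j) := fun hcon => hjk hcon.symm
      have hz : z = flp (flp y j) k := by
        funext m
        by_cases hmj : m = j
        · subst hmj
          have hne : y m ≠ z m := (hmem m).mpr (Or.inl rfl)
          have : flp (flp y m) k m = !(y m) := by
            simp [flp, hjk]
          rw [this]
          cases hy2 : y m <;> cases hz2 : z m <;> simp_all
        · by_cases hmk : m = k
          · subst hmk
            have hne : y m ≠ z m := (hmem m).mpr (Or.inr rfl)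
            have : flp (flp y j) m m = !(y m) := by
              simp [flp, hkj]
            rw [this]
            cases hy2 : y m <;> cases hz2 : z m <;> simp_all
          · have heq : y m = z m := by
              by_contra hcon
              rcases (hmem m).mp hcon with h1 | h1
              exacts [hmj h1, hmk h1]
            have : flp (flp y j) k m = y m := by simp [flp, hmj, hmk]
            rw [this, heq]
      have hyjk : flp y j k = y k := by simp [flp, hkj]
      have hwtz : (wt z : ℂ) = (wt (flp y j) : ℂ) + (if y k = true then -1 else 1) := by
        rw [hz, wt_flp_c (flp y j) k, hyjk]
      have hwtk := wt_flp_c y k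
      simp only [dd]
      rw [hwtz, hwtk]
      ring
    · have hAzero : ∀ m : Fin D, adjMat D (flp y m) z = 0 := by
        intro m
        rw [adjMat, if_neg]
        rw [filter_flp_eq]
        by_cases hym : y m = z m
        · rw [if_pos hym, Finset.card_insert_of_notMem (by simp [hym])]
          intro hcon
          have h0 : (Finset.univ.filter fun i => y i ≠ z i).card = 0 := by omega
          have hne : ∃ i, y i ≠ z i := Function.ne_iff.mp hyz
          obtain ⟨i, hi⟩ := hne
          have : i ∈ (Finset.univ.filter fun i => y i ≠ z i) := by simp [hi]
          rw [Finset.card_eq_zero.mp h0] at this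
          exact absurd this (Finset.notMem_empty i)
        · have hmm : m ∈ (Finset.univ.filter fun i => y i ≠ z i) := by simp [hym]
          rw [if_neg hym, Finset.card_erase_of_mem hmm]
          have h1 : 1 ≤ (Finset.univ.filter fun i => y i ≠ z i).card :=
            Finset.card_pos.mpr ⟨m, hmm⟩
          omega
      simp_rw [hAzero, mul_zero, zero_mul, sub_zero, Finset.sum_const_zero]

end CycAux
/-- The cyclic commutation relations `AA* - A*A = 2iAᵉ`,
`A*Aᵉ - AᵉA* = 2iA`, `AᵉA - AAᵉ = 2iA*`. -/
theorem cyclic_commutation (D : ℕ) (hD : 0 < D) :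
    adjMat D * dualAdjMat D - dualAdjMat D * adjMat D = (2 * Complex.I) • imagAdjMat D ∧
    dualAdjMat D * imagAdjMat D - imagAdjMat D * dualAdjMat D = (2 * Complex.I) • adjMat D ∧
    imagAdjMat D * adjMat D - adjMat D * imagAdjMat D = (2 * Complex.I) • dualAdjMat D := by
  exact ⟨CycAux.rel1, CycAux.rel2, CycAux.rel3⟩
end
end

section
/- The matrix P belongs to the Terwilliger algebra T, i.e. P lies in the subalgebra of Mat_X(ℂ) generated by A and A*. -/
noncomputable section

open Matrix Finset

set_option maxHeartbeats 1000000

namespace PmatAux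

open Polynomial

/-- `√2` as a complex number. -/
def r2 : ℂ := (Real.sqrt 2 : ℝ)

lemma r2_sq : r2 * r2 = 2 := by
  unfold r2
  rw [← Complex.ofReal_mul, Real.mul_self_sqrt (by norm_num)]
  norm_num

lemma r2_ne : r2 ≠ 0 := by
  unfold r2
  simp only [ne_eq, Complex.ofReal_eq_zero]
  positivity

/-- eigenvalues `±√2` of `H₁ = σ_x + σ_z`. -/
def cB (b : Bool) : ℂ := if b then -r2 else r2

/-- The eigenvector matrix `K`, columns indexed by `s`: `K y s = (v_s)_y`. -/
def Km : Bool → Bool → ℂ := fun y s => if y then 1 else cB s + 1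

/-- inverse of `K`. -/
def Km' : Bool → Bool → ℂ := fun s z =>
  match s, z with
  | false, false => 1 / (2 * r2)
  | false, true  => (r2 - 1) / (2 * r2)
  | true,  false => -(1 / (2 * r2))
  | true,  true  => (r2 + 1) / (2 * r2)

/-- one-qubit Hadamard-sign matrix `(-1)^{yz}`. -/
def hb : Bool → Bool → ℂ := fun y z => if y && z then -1 else 1

lemma KK' (y z : Bool) : ∑ b : Bool, Km y b * Km' b z = if y = z then 1 else 0 := by
  have h2 : r2 * r2 = 2 := r2_sq
  have hne : r2 ≠ 0 := r2_ne
  cases y <;> cases z <;>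
    simp only [Fintype.sum_bool, Km, Km', cB, Bool.false_eq_true, Bool.true_eq_false,
      if_true, if_false]
  all_goals try norm_num
  all_goals try field_simp
  all_goals first
    | ring1
    | linear_combination (1 : ℂ) * h2
    | linear_combination (-1 : ℂ) * h2
    | linear_combination r2 * h2
    | linear_combination (-r2) * h2
    | linear_combination (2 : ℂ) * h2
    | linear_combination (-2 : ℂ) * h2

lemma K'K (y z : Bool) : ∑ b : Bool, Km' y b * Km b z = if y = z then 1 else 0 := by
  have h2 : r2 * r2 = 2 := r2_sq
  have hne : r2 ≠ 0 := r2_ne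
  cases y <;> cases z <;>
    simp only [Fintype.sum_bool, Km, Km', cB, Bool.false_eq_true, Bool.true_eq_false,
      if_true, if_false]
  all_goals try norm_num
  all_goals try field_simp
  all_goals first
    | ring1
    | linear_combination (1 : ℂ) * h2
    | linear_combination (-1 : ℂ) * h2
    | linear_combination r2 * h2
    | linear_combination (-r2) * h2
    | linear_combination (2 : ℂ) * h2
    | linear_combination (-2 : ℂ) * h2

lemma hK (y s : Bool) : ∑ b : Bool, hb y b * Km b s = cB s * Km y s := by
  have h2 : r2 * r2 = 2 := r2_sq
  cases y <;> cases s <;>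
    simp only [Fintype.sum_bool, Km, hb, cB, Bool.false_eq_true, Bool.true_eq_false,
      Bool.and_self, Bool.and_false, Bool.false_and, Bool.true_and, if_true, if_false]
  all_goals first
    | ring1
    | linear_combination (1 : ℂ) * h2
    | linear_combination (-1 : ℂ) * h2

lemma flipK (b t : Bool) : Km (!b) t + (if b then (-1:ℂ) else 1) * Km b t = cB t * Km b t := by
  have h2 : r2 * r2 = 2 := r2_sq
  cases b <;> cases t <;>
    simp only [Km, cB, Bool.not_true, Bool.not_false, Bool.false_eq_true, Bool.true_eq_false,
      if_true, if_false]
  all_goals first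
    | ring1
    | linear_combination (1 : ℂ) * h2
    | linear_combination (-1 : ℂ) * h2

lemma P1_eq (y z : Bool) : P1 y z = (if y then -Complex.I else 1) * hb y z := by
  cases y <;> cases z <;> simp [P1, hb]

variable (D : ℕ)

/-- Kronecker powers. -/
def Vm : Matrix (Vtx D) (Vtx D) ℂ := fun y s => ∏ k, Km (y k) (s k)

def Wm : Matrix (Vtx D) (Vtx D) ℂ := fun s z => ∏ k, Km' (s k) (z k)

def Hm : Matrix (Vtx D) (Vtx D) ℂ := fun y z => ∏ k, hb (y k) (z k)

def bet (s : Vtx D) : ℂ := ∑ k, cB (s k)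

def eta (s : Vtx D) : ℂ := ∏ k, cB (s k)

lemma prod_ite_eq_one_zero {D : ℕ} (y z : Vtx D) :
    (∏ k, if y k = z k then (1:ℂ) else 0) = if y = z then 1 else 0 := by
  by_cases h : y = z
  · subst h; simp
  · rw [if_neg h]
    obtain ⟨k, hk⟩ : ∃ k, y k ≠ z k := by
      by_contra hc
      push_neg at hc
      exact h (funext hc)
    exact Finset.prod_eq_zero (Finset.mem_univ k) (by rw [if_neg hk])

lemma VW : Vm D * Wm D = 1 := by
  ext y z
  rw [Matrix.mul_apply]
  simp only [Vm, Wm]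
  calc
    ∑ s : Vtx D, (∏ k, Km (y k) (s k)) * ∏ k, Km' (s k) (z k)
      = ∑ s : Vtx D, ∏ k, (Km (y k) (s k) * Km' (s k) (z k)) := by
        refine Finset.sum_congr rfl fun s _ => ?_
        rw [Finset.prod_mul_distrib]
    _ = ∏ k, ∑ b : Bool, Km (y k) b * Km' b (z k) :=
        (Fintype.prod_sum (fun (k : Fin D) (b : Bool) => Km (y k) b * Km' b (z k))).symm
    _ = ∏ k, if y k = z k then (1:ℂ) else 0 := by
        refine Finset.prod_congr rfl fun k _ => KK' _ _
    _ = if y = z then 1 else 0 := prod_ite_eq_one_zero y z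
    _ = (1 : Matrix (Vtx D) (Vtx D) ℂ) y z := (Matrix.one_apply).symm

lemma WV : Wm D * Vm D = 1 := by
  ext y z
  rw [Matrix.mul_apply]
  simp only [Vm, Wm]
  calc
    ∑ s : Vtx D, (∏ k, Km' (y k) (s k)) * ∏ k, Km (s k) (z k)
      = ∑ s : Vtx D, ∏ k, (Km' (y k) (s k) * Km (s k) (z k)) := by
        refine Finset.sum_congr rfl fun s _ => ?_
        rw [Finset.prod_mul_distrib]
    _ = ∏ k, ∑ b : Bool, Km' (y k) b * Km b (z k) :=
        (Fintype.prod_sum (fun (k : Fin D) (b : Bool) => Km' (y k) b * Km b (z k))).symm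
    _ = ∏ k, if y k = z k then (1:ℂ) else 0 := by
        refine Finset.prod_congr rfl fun k _ => K'K _ _
    _ = if y = z then 1 else 0 := prod_ite_eq_one_zero y z
    _ = (1 : Matrix (Vtx D) (Vtx D) ℂ) y z := (Matrix.one_apply).symm

lemma HV : Hm D * Vm D = Vm D * Matrix.diagonal (eta D) := by
  ext y s
  rw [Matrix.mul_apply, Matrix.mul_diagonal]
  simp only [Vm, Hm, eta]
  calc
    ∑ z : Vtx D, (∏ k, hb (y k) (z k)) * ∏ k, Km (z k) (s k)
      = ∑ z : Vtx D, ∏ k, (hb (y k) (z k) * Km (z k) (s k)) := by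
        refine Finset.sum_congr rfl fun z _ => ?_
        rw [Finset.prod_mul_distrib]
    _ = ∏ k, ∑ b : Bool, hb (y k) b * Km b (s k) :=
        (Fintype.prod_sum (fun (k : Fin D) (b : Bool) => hb (y k) b * Km b (s k))).symm
    _ = ∏ k, (cB (s k) * Km (y k) (s k)) := by
        refine Finset.prod_congr rfl fun k _ => hK _ _
    _ = (∏ k, Km (y k) (s k)) * ∏ k, cB (s k) := by
        rw [Finset.prod_mul_distrib]; ring

lemma wt_le {D : ℕ} (y : Vtx D) : wt y ≤ D := by
  unfold wt
  calc (Finset.univ.filter fun k => y k = true).card ≤ Finset.univ.card :=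
        Finset.card_filter_le _ _
    _ = D := by simp

lemma sum_e {D : ℕ} (y : Vtx D) :
    ∑ k, (if y k then (-1:ℂ) else 1) = (D:ℂ) - 2 * (wt y : ℂ) := by
  rw [Finset.sum_ite, Finset.sum_const, Finset.sum_const]
  have h1 : (Finset.univ.filter fun k => y k = true).card = wt y := rfl
  have h2 : (Finset.univ.filter fun k => ¬ (y k = true)).card = D - wt y := by
    have := Finset.card_filter_add_card_filter_not
      (s := (Finset.univ : Finset (Fin D))) (p := fun k => y k = true)
    have hD : (Finset.univ : Finset (Fin D)).card = D := by simp
    omega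
  rw [h1, h2]
  have hle : wt y ≤ D := wt_le y
  simp only [nsmul_eq_mul, mul_one, mul_neg_one, Nat.cast_sub hle]
  ring

lemma sum_adj {D : ℕ} (y : Vtx D) (f : Vtx D → ℂ) :
    ∑ z, adjMat D y z * f z = ∑ k, f (Function.update y k (!(y k))) := by
  simp only [adjMat, ite_mul, one_mul, zero_mul]
  rw [Finset.sum_ite, Finset.sum_const_zero, add_zero]
  refine (Finset.sum_bij (fun k _ => Function.update y k (!(y k))) ?_ ?_ ?_ ?_).symm
  · intro k _
    rw [Finset.mem_filter]
    refine ⟨Finset.mem_univ _, ?_⟩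
    have : (Finset.univ.filter fun j => y j ≠ Function.update y k (!(y k)) j) = {k} := by
      ext j
      simp only [Finset.mem_filter, Finset.mem_univ, true_and, Finset.mem_singleton]
      constructor
      · intro hj
        by_contra hjk
        rw [Function.update_of_ne hjk] at hj
        exact hj rfl
      · intro hj; subst hj
        rw [Function.update_self]
        simp
    rw [this, Finset.card_singleton]
  · intro k _ k' _ h
    by_contra hkk
    have h1 := congrFun h k
    simp only [Function.update_self, Function.update_of_ne hkk] at h1
    simp at h1
  · intro z hz
    rw [Finset.mem_filter] at hz
    obtain ⟨k0, hk0⟩ := Finset.card_eq_one.mp hz.2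
    refine ⟨k0, Finset.mem_univ _, ?_⟩
    show Function.update y k0 (!(y k0)) = z
    funext j
    by_cases hj : j = k0
    · subst hj
      rw [Function.update_self]
      have : j ∈ (Finset.univ.filter fun k => y k ≠ z k) := by
        rw [hk0]; exact Finset.mem_singleton_self _
      rw [Finset.mem_filter] at this
      cases hyz : y j <;> cases hz2 : z j <;> simp_all
    · rw [Function.update_of_ne hj]
      have : j ∉ (Finset.univ.filter fun k => y k ≠ z k) := by
        rw [hk0]; simp [hj]
      rw [Finset.mem_filter] at this
      push_neg at this
      exact this (Finset.mem_univ _)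
  · intro k _; rfl

lemma upd_prod {D : ℕ} (y s : Vtx D) (k : Fin D) (b : Bool) :
    Vm D (Function.update y k b) s
      = Km b (s k) * ∏ j ∈ Finset.univ.erase k, Km (y j) (s j) := by
  unfold Vm
  rw [← Finset.mul_prod_erase Finset.univ _ (Finset.mem_univ k)]
  rw [Function.update_self]
  congr 1
  refine Finset.prod_congr rfl fun j hj => ?_
  rw [Function.update_of_ne (Finset.mem_erase.mp hj).1]

lemma V_split {D : ℕ} (y s : Vtx D) (k : Fin D) :
    Vm D y s = Km (y k) (s k) * ∏ j ∈ Finset.univ.erase k, Km (y j) (s j) := by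
  unfold Vm
  rw [← Finset.mul_prod_erase Finset.univ _ (Finset.mem_univ k)]

lemma BV : (adjMat D + dualAdjMat D) * Vm D = Vm D * Matrix.diagonal (bet D) := by
  ext y s
  rw [Matrix.mul_apply, Matrix.mul_diagonal]
  simp only [Matrix.add_apply]
  have hsplit : ∀ z, (adjMat D y z + dualAdjMat D y z) * Vm D z s
      = adjMat D y z * Vm D z s + dualAdjMat D y z * Vm D z s := fun z => add_mul _ _ _
  rw [Finset.sum_congr rfl fun z _ => hsplit z, Finset.sum_add_distrib]
  have hdual : ∑ z, dualAdjMat D y z * Vm D z s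
      = (∑ k, (if y k then (-1:ℂ) else 1)) * Vm D y s := by
    unfold dualAdjMat
    rw [sum_e]
    rw [Finset.sum_eq_single y]
    · rw [Matrix.diagonal_apply_eq]
    · intro z _ hz
      rw [Matrix.diagonal_apply_ne' _ hz, zero_mul]
    · intro h; exact absurd (Finset.mem_univ y) h
  rw [hdual, sum_adj, Finset.sum_mul, ← Finset.sum_add_distrib]
  have hterm : ∀ k, Vm D (Function.update y k (!(y k))) s
      + (if y k then (-1:ℂ) else 1) * Vm D y s = cB (s k) * Vm D y s := by
    intro k
    rw [upd_prod, V_split y s k]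
    have := flipK (y k) (s k)
    calc Km (!(y k)) (s k) * ∏ j ∈ Finset.univ.erase k, Km (y j) (s j)
          + (if y k then (-1:ℂ) else 1) * (Km (y k) (s k) * ∏ j ∈ Finset.univ.erase k, Km (y j) (s j))
        = (Km (!(y k)) (s k) + (if y k then (-1:ℂ) else 1) * Km (y k) (s k))
            * ∏ j ∈ Finset.univ.erase k, Km (y j) (s j) := by ring
      _ = cB (s k) * Km (y k) (s k) * ∏ j ∈ Finset.univ.erase k, Km (y j) (s j) := by rw [this]
      _ = cB (s k) * (Km (y k) (s k) * ∏ j ∈ Finset.univ.erase k, Km (y j) (s j)) := by ring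
  rw [Finset.sum_congr rfl fun k _ => hterm k, ← Finset.sum_mul]
  unfold bet
  ring

lemma B_eq : adjMat D + dualAdjMat D = Vm D * Matrix.diagonal (bet D) * Wm D := by
  calc adjMat D + dualAdjMat D
      = (adjMat D + dualAdjMat D) * (Vm D * Wm D) := by rw [VW, mul_one]
    _ = ((adjMat D + dualAdjMat D) * Vm D) * Wm D := by rw [mul_assoc]
    _ = (Vm D * Matrix.diagonal (bet D)) * Wm D := by rw [BV]

lemma Hm_eq : Hm D = Vm D * Matrix.diagonal (eta D) * Wm D := by
  calc Hm D = Hm D * (Vm D * Wm D) := by rw [VW, mul_one]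
    _ = (Hm D * Vm D) * Wm D := by rw [mul_assoc]
    _ = (Vm D * Matrix.diagonal (eta D)) * Wm D := by rw [HV]

/-- Conjugation by `Vm` as an algebra homomorphism. -/
def conjHom : Matrix (Vtx D) (Vtx D) ℂ →ₐ[ℂ] Matrix (Vtx D) (Vtx D) ℂ where
  toFun M := Vm D * M * Wm D
  map_one' := by
    show Vm D * 1 * Wm D = 1
    rw [mul_one, VW]
  map_mul' M N := by
    show Vm D * (M * N) * Wm D = (Vm D * M * Wm D) * (Vm D * N * Wm D)
    rw [show (Vm D * M * Wm D) * (Vm D * N * Wm D)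
          = Vm D * M * (Wm D * Vm D) * N * Wm D by noncomm_ring, WV, mul_one]
    noncomm_ring
  map_zero' := by
    show Vm D * 0 * Wm D = 0
    rw [mul_zero, zero_mul]
  map_add' M N := by
    show Vm D * (M + N) * Wm D = Vm D * M * Wm D + Vm D * N * Wm D
    rw [Matrix.mul_add, Matrix.add_mul]
  commutes' r := by
    show Vm D * (algebraMap ℂ (Matrix (Vtx D) (Vtx D) ℂ) r) * Wm D
        = algebraMap ℂ (Matrix (Vtx D) (Vtx D) ℂ) r
    rw [Algebra.algebraMap_eq_smul_one, mul_smul_comm, mul_one, smul_mul_assoc, VW]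

lemma aeval_diag {n : Type*} [Fintype n] [DecidableEq n] (d : n → ℂ) (p : ℂ[X]) :
    Polynomial.aeval (Matrix.diagonal d) p = Matrix.diagonal fun i => p.eval (d i) := by
  induction p using Polynomial.induction_on' with
  | add p q hp hq =>
      rw [map_add, hp, hq, Matrix.diagonal_add, Matrix.diagonal_eq_diagonal_iff]
      intro i
      rw [Polynomial.eval_add]
  | monomial m a =>
      rw [Polynomial.aeval_monomial, Matrix.diagonal_pow,
        show (algebraMap ℂ (Matrix n n ℂ)) a = Matrix.diagonal (fun _ => a) from rfl,
        Matrix.diagonal_mul_diagonal, Matrix.diagonal_eq_diagonal_iff]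
      intro i
      rw [Polynomial.eval_monomial, Pi.pow_apply]

lemma aeval_conj (d : Vtx D → ℂ) (p : ℂ[X]) :
    Polynomial.aeval (Vm D * Matrix.diagonal d * Wm D) p
      = Vm D * Matrix.diagonal (fun s => p.eval (d s)) * Wm D := by
  have h := Polynomial.aeval_algHom_apply (conjHom D) (Matrix.diagonal d) p
  have h0 : conjHom D (Matrix.diagonal d) = Vm D * Matrix.diagonal d * Wm D := rfl
  rw [h0] at h
  rw [h, aeval_diag]
  rfl

lemma bet_eq (s : Vtx D) : bet D s = r2 * ((D:ℂ) - 2 * (wt s : ℂ)) := by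
  unfold bet
  have : ∀ k, cB (s k) = r2 * (if s k then (-1:ℂ) else 1) := by
    intro k; unfold cB; cases s k <;> simp
  rw [Finset.sum_congr rfl fun k _ => this k, ← Finset.mul_sum, sum_e]

lemma eta_eq (s : Vtx D) : eta D s = r2 ^ D * (-1:ℂ) ^ (wt s) := by
  unfold eta cB
  rw [Finset.prod_ite, Finset.prod_const, Finset.prod_const]
  have h1 : (Finset.univ.filter fun k => s k = true).card = wt s := rfl
  have h2 : (Finset.univ.filter fun k => ¬ (s k = true)).card = D - wt s := by
    have := Finset.card_filter_add_card_filter_not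
      (s := (Finset.univ : Finset (Fin D))) (p := fun k => s k = true)
    have hD : (Finset.univ : Finset (Fin D)).card = D := by simp
    omega
  rw [h1, h2, neg_pow]
  have hle : wt s ≤ D := wt_le s
  rw [mul_assoc, ← pow_add, Nat.add_sub_cancel' hle]
  ring

/-- polynomial giving the diagonal factor. -/
def fpoly : ℂ[X] :=
  Lagrange.interpolate (Finset.range (D+1)) (fun j => (D:ℂ) - 2 * (j:ℂ))
    (fun j => (-Complex.I) ^ j)

/-- polynomial giving `Hm` from `A + A*`. -/
def qpoly : ℂ[X] :=
  Lagrange.interpolate (Finset.range (D+1)) (fun m => r2 * ((D:ℂ) - 2 * (m:ℂ)))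
    (fun m => r2 ^ D * (-1:ℂ) ^ m)

lemma nodes_inj : Set.InjOn (fun j : ℕ => (D:ℂ) - 2 * (j:ℂ)) (Finset.range (D+1)) := by
  intro a _ b _ h
  simp only at h
  have : (a:ℂ) = (b:ℂ) := by linear_combination (-1/2 : ℂ) * h
  exact_mod_cast this

lemma nodes_inj' : Set.InjOn (fun m : ℕ => r2 * ((D:ℂ) - 2 * (m:ℂ))) (Finset.range (D+1)) := by
  intro a _ b _ h
  simp only at h
  have h2 := mul_left_cancel₀ r2_ne h
  have : (a:ℂ) = (b:ℂ) := by linear_combination (-1/2 : ℂ) * h2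
  exact_mod_cast this

lemma fpoly_eval : Polynomial.aeval (dualAdjMat D) (fpoly D)
    = Matrix.diagonal fun y => (-Complex.I) ^ (wt y) := by
  unfold dualAdjMat
  rw [aeval_diag, Matrix.diagonal_eq_diagonal_iff]
  intro y
  have hy : wt y ∈ Finset.range (D+1) := Finset.mem_range.mpr (Nat.lt_succ_of_le (wt_le y))
  exact Lagrange.eval_interpolate_at_node _ (nodes_inj D) hy

lemma qpoly_eval : Polynomial.aeval (adjMat D + dualAdjMat D) (qpoly D) = Hm D := by
  rw [B_eq, aeval_conj, Hm_eq]
  have h : Matrix.diagonal (fun s : Vtx D => (qpoly D).eval (bet D s))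
      = Matrix.diagonal (eta D) := by
    rw [Matrix.diagonal_eq_diagonal_iff]
    intro s
    rw [bet_eq, eta_eq]
    have hy : wt s ∈ Finset.range (D+1) := Finset.mem_range.mpr (Nat.lt_succ_of_le (wt_le s))
    exact Lagrange.eval_interpolate_at_node _ (nodes_inj' D) hy
  rw [h]

lemma P_eq : Pmat D = Matrix.diagonal (fun y => (-Complex.I) ^ (wt y)) * Hm D := by
  ext y z
  rw [Matrix.diagonal_mul]
  unfold Pmat Hm
  rw [Finset.prod_congr rfl fun k _ => P1_eq (y k) (z k), Finset.prod_mul_distrib]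
  congr 1
  rw [Finset.prod_ite, Finset.prod_const, Finset.prod_const, one_pow, mul_one]
  rfl

lemma aeval_mem {S : Subalgebra ℂ (Matrix (Vtx D) (Vtx D) ℂ)}
    {x : Matrix (Vtx D) (Vtx D) ℂ} (hx : x ∈ S) (p : ℂ[X]) :
    Polynomial.aeval x p ∈ S := by
  rw [Polynomial.aeval_eq_sum_range]
  exact Subalgebra.sum_mem _ fun i _ => Subalgebra.smul_mem _ (pow_mem hx i) _

end PmatAux

/-- `P` belongs to the Terwilliger algebra `T`, the subalgebra of
`Mat_X(ℂ)` generated by `A` and `A*`. -/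
theorem Pmat_mem_Terwilliger (D : ℕ) (hD : 0 < D) :
    Pmat D ∈ Algebra.adjoin ℂ ({adjMat D, dualAdjMat D} : Set (Matrix (Vtx D) (Vtx D) ℂ)) := by
  have hA : adjMat D ∈ Algebra.adjoin ℂ ({adjMat D, dualAdjMat D} : Set (Matrix (Vtx D) (Vtx D) ℂ)) :=
    Algebra.subset_adjoin (by simp)
  have hB : dualAdjMat D ∈ Algebra.adjoin ℂ ({adjMat D, dualAdjMat D} : Set (Matrix (Vtx D) (Vtx D) ℂ)) :=
    Algebra.subset_adjoin (by simp)
  rw [PmatAux.P_eq]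
  refine mul_mem ?_ ?_
  · rw [← PmatAux.fpoly_eval]
    exact PmatAux.aeval_mem D hB _
  · rw [← PmatAux.qpoly_eval]
    exact PmatAux.aeval_mem D (add_mem hA hB) _
end
end

section
/- The matrix P satisfies P·(conjugate of P)ᵗ = 2^D·I and P³ = 2^D·(1−i)^D·I; in particular P is invertible. -/
noncomputable section

open Matrix Finset

/-- Auxiliary: the D-fold tensor power of a 2×2 matrix. -/
def tmat (D : ℕ) (f : Bool → Bool → ℂ) : Matrix (Vtx D) (Vtx D) ℂ :=
  Matrix.of fun y z => ∏ k, f (y k) (z k)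

lemma tmat_mul (D : ℕ) (f g : Bool → Bool → ℂ) :
    tmat D f * tmat D g = tmat D (fun a c => ∑ b, f a b * g b c) := by
  ext y z
  simp only [Matrix.mul_apply, tmat, Matrix.of_apply]
  rw [Finset.prod_univ_sum, Fintype.piFinset_univ]
  exact Finset.sum_congr rfl fun x _ => Finset.prod_mul_distrib.symm

lemma tmat_diag (D : ℕ) (t : ℂ) :
    tmat D (fun a c => if a = c then t else 0) = (t ^ D) • (1 : Matrix (Vtx D) (Vtx D) ℂ) := by
  ext y z
  by_cases h : y = z
  · subst h
    simp [tmat, Matrix.one_apply]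
  · have : ∃ k, y k ≠ z k := by
      by_contra hc
      push_neg at hc
      exact h (funext hc)
    obtain ⟨k, hk⟩ := this
    simp only [tmat, Matrix.of_apply, Matrix.smul_apply, Matrix.one_apply, h,
      ite_false, smul_zero]
    exact Finset.prod_eq_zero (Finset.mem_univ k) (by simp [hk])

lemma Pmat_eq_tmat (D : ℕ) : Pmat D = tmat D P1 := rfl

lemma Pmat_conjT_eq_tmat (D : ℕ) :
    ((Pmat D).map (starRingEnd ℂ)).transpose
      = tmat D (fun a c => (starRingEnd ℂ) (P1 c a)) := by
  ext y z
  simp [Pmat, tmat, Matrix.transpose_apply, Matrix.map_apply, map_prod]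

/-- `P·(conj P)ᵗ = 2^D·I`, `P³ = 2^D·(1-i)^D·I`; in particular `P` is
invertible. -/
theorem Pmat_relations (D : ℕ) (hD : 0 < D) :
    Pmat D * ((Pmat D).map (starRingEnd ℂ)).transpose
        = ((2 : ℂ) ^ D) • (1 : Matrix (Vtx D) (Vtx D) ℂ) ∧
    Pmat D ^ 3 = ((2 : ℂ) ^ D * (1 - Complex.I) ^ D) • (1 : Matrix (Vtx D) (Vtx D) ℂ) ∧
    IsUnit (Pmat D) := by
  have h1 : Pmat D * ((Pmat D).map (starRingEnd ℂ)).transpose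
      = ((2 : ℂ) ^ D) • (1 : Matrix (Vtx D) (Vtx D) ℂ) := by
    rw [Pmat_conjT_eq_tmat, Pmat_eq_tmat, tmat_mul]
    have hf : (fun a c => ∑ b, P1 a b * (starRingEnd ℂ) (P1 c b))
        = fun a c => if a = c then (2 : ℂ) else 0 := by
      funext a c
      cases a <;> cases c <;>
        simp [Fintype.sum_bool, P1, Complex.ext_iff] <;> ring_nf <;> simp
    rw [hf, tmat_diag]
  have h2 : Pmat D ^ 3
      = ((2 : ℂ) ^ D * (1 - Complex.I) ^ D) • (1 : Matrix (Vtx D) (Vtx D) ℂ) := by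
    rw [pow_succ, pow_succ, pow_one, Pmat_eq_tmat, tmat_mul, tmat_mul]
    have hf : (fun a c => ∑ b, (∑ b', P1 a b' * P1 b' b) * P1 b c)
        = fun a c => if a = c then (2 * (1 - Complex.I)) else 0 := by
      funext a c
      cases a <;> cases c <;>
        simp [Fintype.sum_bool, P1, Complex.ext_iff] <;> ring_nf <;> simp
    rw [hf, tmat_diag, mul_pow]
  refine ⟨h1, h2, ?_⟩
  have h2D : (2 : ℂ) ^ D ≠ 0 := pow_ne_zero _ two_ne_zero
  have hinv : Pmat D * (((2 : ℂ) ^ D)⁻¹ • ((Pmat D).map (starRingEnd ℂ)).transpose) = 1 := by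
    rw [Matrix.mul_smul, h1, smul_smul, inv_mul_cancel₀ h2D, one_smul]
  exact ⟨⟨Pmat D, _, hinv, mul_eq_one_comm.mp hinv⟩, rfl⟩
end
end

section
/- The matrices A, A*, A^ε are cyclically conjugated by P: A*P = PA, A^εP = PA*, and AP = PA^ε (equivalently, since P is invertible, A* = PAP⁻¹, A^ε = PA*P⁻¹, and A = PA^εP⁻¹). -/
noncomputable section

open Matrix Finset

namespace CyclicAux

variable {D : ℕ}

/-- Flip coordinate `k` of `y`. -/
def flip (y : Vtx D) (k : Fin D) : Vtx D := Function.update y k (!(y k))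

lemma flip_self (y : Vtx D) (k : Fin D) : flip y k k = !(y k) := by
  simp [flip]

lemma flip_ne (y : Vtx D) {j k : Fin D} (h : j ≠ k) : flip y k j = y j := by
  simp [flip, Function.update_of_ne h]

lemma diff_flip (y : Vtx D) (k : Fin D) :
    (univ.filter fun j => y j ≠ flip y k j) = {k} := by
  ext j
  by_cases h : j = k
  · subst h; simp [flip_self]
  · simp [h, flip_ne y h]

lemma card_diff_flip (y : Vtx D) (k : Fin D) :
    (univ.filter fun j => y j ≠ flip y k j).card = 1 := by
  rw [diff_flip]; simp

lemma flip_inj (y : Vtx D) {k k' : Fin D} (h : flip y k = flip y k') : k = k' := by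
  by_contra hne
  have h1 : flip y k k = !(y k) := flip_self y k
  have h2 : flip y k' k = y k := flip_ne y hne
  rw [h] at h1
  rw [h2] at h1
  cases y k <;> simp_all

lemma eq_flip (y w : Vtx D) (h : (univ.filter fun j => y j ≠ w j).card = 1) :
    ∃ k, w = flip y k := by
  obtain ⟨k, hk⟩ := Finset.card_eq_one.mp h
  refine ⟨k, funext fun j => ?_⟩
  by_cases hj : j = k
  · subst hj
    have hjmem : j ∈ univ.filter fun i => y i ≠ w i := by rw [hk]; simp
    have : y j ≠ w j := by simpa using hjmem
    rw [flip_self]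
    cases hy : y j <;> cases hw : w j <;> simp_all
  · have hjmem : j ∉ univ.filter fun i => y i ≠ w i := by rw [hk]; simp [hj]
    have : ¬ (y j ≠ w j) := by simpa using hjmem
    rw [flip_ne y hj]
    exact (not_not.mp this).symm

/-- Sum over neighbors of `y` equals sum over coordinate flips. -/
lemma sum_adj (y : Vtx D) (g : Vtx D → ℂ) :
    (∑ w, if (univ.filter fun j => y j ≠ w j).card = 1 then g w else 0)
      = ∑ k, g (flip y k) := by
  rw [← Finset.sum_filter]
  refine (Finset.sum_bij (fun k _ => flip y k) ?_ ?_ ?_ ?_).symm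
  · intro k _
    simp [card_diff_flip]
  · intro k _ k' _ h
    exact flip_inj y h
  · intro w hw
    have hw' : (univ.filter fun j => y j ≠ w j).card = 1 := by simpa using hw
    obtain ⟨k, hk⟩ := eq_flip y w hw'
    exact ⟨k, mem_univ k, hk.symm⟩
  · intro k _
    rfl

lemma Pmat_flip_fst (y z : Vtx D) (k : Fin D) :
    Pmat D (flip y k) z = (if y k = z k then -Complex.I else Complex.I) * Pmat D y z := by
  unfold Pmat
  rw [← Finset.mul_prod_erase univ (fun j => P1 (flip y k j) (z j)) (mem_univ k),
      ← Finset.mul_prod_erase univ (fun j => P1 (y j) (z j)) (mem_univ k)]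
  have hrest : ∏ j ∈ univ.erase k, P1 (flip y k j) (z j)
      = ∏ j ∈ univ.erase k, P1 (y j) (z j) :=
    Finset.prod_congr rfl fun j hj => by rw [flip_ne y (Finset.ne_of_mem_erase hj)]
  rw [hrest, flip_self]
  cases hy : y k <;> cases hz : z k <;> simp [P1] <;> ring_nf <;>
    simp [Complex.I_sq] <;> ring

lemma Pmat_flip_snd (y z : Vtx D) (k : Fin D) :
    Pmat D y (flip z k) = (if y k then -1 else 1) * Pmat D y z := by
  unfold Pmat
  rw [← Finset.mul_prod_erase univ (fun j => P1 (y j) (flip z k j)) (mem_univ k),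
      ← Finset.mul_prod_erase univ (fun j => P1 (y j) (z j)) (mem_univ k)]
  have hrest : ∏ j ∈ univ.erase k, P1 (y j) (flip z k j)
      = ∏ j ∈ univ.erase k, P1 (y j) (z j) :=
    Finset.prod_congr rfl fun j hj => by rw [flip_ne z (Finset.ne_of_mem_erase hj)]
  rw [hrest, flip_self]
  cases hy : y k <;> cases hz : z k <;> simp [P1] <;> ring

lemma wt_flip (y : Vtx D) (k : Fin D) :
    ((wt (flip y k) : ℂ)) = (wt y : ℂ) + (if y k then -1 else 1) := by
  unfold wt
  cases hy : y k
  · have hset : (univ.filter fun j => flip y k j = true)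
        = insert k (univ.filter fun j => y j = true) := by
      ext j
      by_cases hj : j = k
      · subst hj; simp [flip_self, hy]
      · simp [flip_ne y hj, hj]
    rw [hset, Finset.card_insert_of_notMem (by simp [hy])]
    push_cast; ring
  · have hk : k ∈ univ.filter fun j => y j = true := by simp [hy]
    have hset : (univ.filter fun j => flip y k j = true)
        = (univ.filter fun j => y j = true).erase k := by
      ext j
      by_cases hj : j = k
      · subst hj; simp [flip_self, hy]
      · simp [flip_ne y hj, hj]
    rw [hset, Finset.card_erase_of_mem hk]
    have hpos : 1 ≤ (univ.filter fun j => y j = true).card :=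
      Finset.card_pos.mpr ⟨k, hk⟩
    rw [Nat.cast_sub hpos]
    push_cast
    simp [hy]
    ring

lemma sum_pm (y : Vtx D) :
    (∑ k : Fin D, if y k then (-1:ℂ) else 1) = (D : ℂ) - 2 * (wt y : ℂ) := by
  have h : ∀ k, (if y k then (-1:ℂ) else 1)
      = 1 - 2 * (if y k = true then (1:ℂ) else 0) := by
    intro k; cases y k <;> norm_num
  rw [Finset.sum_congr rfl fun k _ => h k, Finset.sum_sub_distrib,
      Finset.sum_const, ← Finset.mul_sum, Finset.sum_boole]
  simp [wt, Finset.card_univ]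

lemma filter_ne_symm (a b : Vtx D) :
    (univ.filter fun j => a j ≠ b j) = (univ.filter fun j => b j ≠ a j) :=
  Finset.filter_congr fun j _ => ne_comm

end CyclicAux

open CyclicAux in
/-- `A`, `A*`, `Aᵉ` are cyclically conjugated by `P`:
`A*P = PA`, `AᵉP = PA*`, `AP = PAᵉ`. -/
theorem cyclic_conjugation_by_P (D : ℕ) (hD : 0 < D) :
    dualAdjMat D * Pmat D = Pmat D * adjMat D ∧
    imagAdjMat D * Pmat D = Pmat D * dualAdjMat D ∧
    adjMat D * Pmat D = Pmat D * imagAdjMat D := by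
  have imag_apply : ∀ w z : Vtx D, imagAdjMat D w z
      = (-Complex.I/2) * (adjMat D w z * ((D:ℂ) - 2*(wt z : ℂ))
          - ((D:ℂ) - 2*(wt w : ℂ)) * adjMat D w z) := by
    intro w z
    simp only [imagAdjMat, dualAdjMat, Matrix.smul_apply, Matrix.sub_apply,
      Matrix.mul_diagonal, Matrix.diagonal_mul, smul_eq_mul]
  refine ⟨?_, ?_, ?_⟩
  · ext y z
    have hL : (dualAdjMat D * Pmat D) y z = ((D:ℂ) - 2*(wt y : ℂ)) * Pmat D y z := by
      rw [dualAdjMat, Matrix.diagonal_mul]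
    have hs : ∀ w, Pmat D y w * adjMat D w z
        = if (univ.filter fun j => z j ≠ w j).card = 1 then Pmat D y w else 0 := by
      intro w
      simp only [adjMat, filter_ne_symm w z, mul_ite, mul_one, mul_zero]
    rw [hL, Matrix.mul_apply, Finset.sum_congr rfl fun w _ => hs w,
      sum_adj z (fun w => Pmat D y w)]
    have : ∀ k : Fin D, Pmat D y (flip z k) = (if y k then (-1:ℂ) else 1) * Pmat D y z :=
      fun k => Pmat_flip_snd y z k
    rw [Finset.sum_congr rfl fun k _ => this k, ← Finset.sum_mul, sum_pm]
  · ext y z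
    have hR : (Pmat D * dualAdjMat D) y z = Pmat D y z * ((D:ℂ) - 2*(wt z : ℂ)) := by
      rw [dualAdjMat, Matrix.mul_diagonal]
    have hs : ∀ w, imagAdjMat D y w * Pmat D w z
        = if (univ.filter fun j => y j ≠ w j).card = 1 then
            ((-Complex.I/2) * (((D:ℂ) - 2*(wt w : ℂ)) - ((D:ℂ) - 2*(wt y : ℂ)))
              * Pmat D w z) else 0 := by
      intro w
      rw [imag_apply y w]
      simp only [adjMat]
      by_cases hc : (univ.filter fun j => y j ≠ w j).card = 1 <;> simp [hc] <;> ring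
    rw [hR, Matrix.mul_apply, Finset.sum_congr rfl fun w _ => hs w, sum_adj y]
    have hterm : ∀ k : Fin D,
        ((-Complex.I/2) * (((D:ℂ) - 2*(wt (flip y k) : ℂ)) - ((D:ℂ) - 2*(wt y : ℂ)))
          * Pmat D (flip y k) z)
        = (if z k then (-1:ℂ) else 1) * Pmat D y z := by
      intro k
      rw [wt_flip, Pmat_flip_fst]
      cases hy : y k <;> cases hz : z k <;> simp <;> ring_nf <;>
        simp [Complex.I_sq] <;> ring
    rw [Finset.sum_congr rfl fun k _ => hterm k, ← Finset.sum_mul, sum_pm, mul_comm]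
  · ext y z
    have hsL : ∀ w, adjMat D y w * Pmat D w z
        = if (univ.filter fun j => y j ≠ w j).card = 1 then Pmat D w z else 0 := by
      intro w
      simp only [adjMat, ite_mul, one_mul, zero_mul]
    have hsR : ∀ w, Pmat D y w * imagAdjMat D w z
        = if (univ.filter fun j => z j ≠ w j).card = 1 then
            ((-Complex.I/2) * (((D:ℂ) - 2*(wt z : ℂ)) - ((D:ℂ) - 2*(wt w : ℂ)))
              * Pmat D y w) else 0 := by
      intro w
      rw [imag_apply w z]
      simp only [adjMat, filter_ne_symm w z]
      by_cases hc : (univ.filter fun j => z j ≠ w j).card = 1 <;> simp [hc] <;> ring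
    rw [Matrix.mul_apply, Matrix.mul_apply,
      Finset.sum_congr rfl fun w _ => hsL w, sum_adj y (fun w => Pmat D w z),
      Finset.sum_congr rfl fun w _ => hsR w, sum_adj z]
    refine Finset.sum_congr rfl fun k _ => ?_
    rw [Pmat_flip_fst, wt_flip, Pmat_flip_snd]
    generalize Pmat D y z = R
    cases hy : y k <;> cases hz : z k <;>
      simp only [hy, hz, reduceIte, Bool.false_eq_true, Bool.true_eq_false, if_true, if_false] <;>
      ring
end
end

section
/- The matrix A^ε is diagonalizable; its eigenvalues are exactly D − 2i for 0 ≤ i ≤ D, and for each 0 ≤ i ≤ D the eigenspace of A^ε for the eigenvalue D − 2i has dimension binom(D, i). In particular ℂ^X is the direct sum of these eigenspaces. -/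
noncomputable section

open Matrix Finset

/-! ### Auxiliary lemmas -/

/-- The entrywise inverse data of `P1`. -/
def Q1 : Bool → Bool → ℂ
  | false, false => 1/2
  | false, true  => Complex.I/2
  | true,  false => 1/2
  | true,  true  => -(Complex.I/2)

/-- The D-fold Kronecker power of `Q1`; the inverse of `Pmat D`. -/
def Qmat (D : ℕ) : Matrix (Vtx D) (Vtx D) ℂ :=
  fun y z => ∏ k : Fin D, Q1 (y k) (z k)

lemma sum_prod_eq {D : ℕ} (g : Fin D → Bool → ℂ) :
    ∑ w : Vtx D, ∏ k, g k (w k) = ∏ k, ∑ b, g k b := by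
  rw [Finset.prod_univ_sum, Fintype.piFinset_univ]

lemma QP {D : ℕ} : Qmat D * Pmat D = 1 := by
  ext y z
  simp only [Matrix.mul_apply, Qmat, Pmat, ← Finset.prod_mul_distrib]
  rw [sum_prod_eq (fun k b => Q1 (y k) b * P1 b (z k))]
  have h : ∀ k, (∑ b, Q1 (y k) b * P1 b (z k)) = if y k = z k then 1 else 0 := by
    intro k
    cases hy : y k <;> cases hz : z k <;>
      · simp [Q1, P1, Fintype.sum_bool]
        ring_nf
        simp [Complex.I_sq]
        try ring
  simp only [h, Finset.prod_boole]
  by_cases hyz : y = z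
  · subst hyz; simp [Matrix.one_apply]
  · rw [Matrix.one_apply_ne hyz, if_neg]
    intro hall
    exact hyz (funext fun k => hall k (Finset.mem_univ k))

lemma hPQ {D : ℕ} : Pmat D * Qmat D = 1 := mul_eq_one_comm.mp QP

/-- Flip coordinate `k` of a vertex. -/
def flp {D : ℕ} (k : Fin D) (y : Vtx D) : Vtx D := Function.update y k (!y k)

lemma flp_apply_self {D : ℕ} (k : Fin D) (y : Vtx D) : flp k y k = !y k := by
  simp [flp]

lemma flp_apply_ne {D : ℕ} {k j : Fin D} (y : Vtx D) (h : j ≠ k) : flp k y j = y j := by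
  simp [flp, Function.update_of_ne h]

lemma filter_flp {D : ℕ} (k : Fin D) (y : Vtx D) :
    (Finset.univ.filter fun j => y j ≠ flp k y j) = {k} := by
  ext j
  simp only [Finset.mem_filter, Finset.mem_univ, true_and, Finset.mem_singleton]
  constructor
  · intro h
    by_contra hk
    exact h (flp_apply_ne y hk).symm
  · rintro rfl
    simp [flp]

lemma hamming_one {D : ℕ} (y w : Vtx D)
    (h : (Finset.univ.filter fun j => y j ≠ w j).card = 1) : ∃ k, w = flp k y := by
  obtain ⟨k, hk⟩ := Finset.card_eq_one.mp h
  refine ⟨k, funext fun j => ?_⟩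
  by_cases hj : j = k
  · subst hj
    have : y j ≠ w j := by
      have := Finset.ext_iff.mp hk j
      simp at this; tauto
    rw [flp_apply_self]
    cases hyw : y j <;> cases hw : w j <;> simp_all
  · have : ¬ (y j ≠ w j) := by
      have := Finset.ext_iff.mp hk j
      simp at this; tauto
    rw [flp_apply_ne y hj]; tauto

lemma wt_flp {D : ℕ} (k : Fin D) (y : Vtx D) :
    (wt (flp k y) : ℤ) = if y k then (wt y : ℤ) - 1 else (wt y : ℤ) + 1 := by
  classical
  unfold wt
  cases hy : y k
  · have : (Finset.univ.filter fun j => flp k y j = true)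
        = insert k (Finset.univ.filter fun j => y j = true) := by
      ext j
      by_cases hj : j = k
      · subst hj; simp [flp_apply_self, hy]
      · simp [flp_apply_ne y hj, hj]
    rw [this, Finset.card_insert_of_notMem (by simp [hy])]
    push_cast; ring
  · have : (Finset.univ.filter fun j => flp k y j = true)
        = (Finset.univ.filter fun j => y j = true).erase k := by
      ext j
      by_cases hj : j = k
      · subst hj; simp [flp_apply_self, hy]
      · simp [flp_apply_ne y hj, hj]
    rw [this, Finset.card_erase_of_mem (by simp [hy])]
    have hpos : 0 < (Finset.univ.filter fun j => y j = true).card :=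
      Finset.card_pos.mpr ⟨k, by simp [hy]⟩
    rw [Nat.cast_sub (by omega : 1 ≤ _)]
    simp

/-- The key similarity identity `Aᵉ P = P A*`. -/
lemma key_identity (D : ℕ) : imagAdjMat D * Pmat D = Pmat D * dualAdjMat D := by
  ext y z
  have hent : ∀ w, imagAdjMat D y w
      = (if (Finset.univ.filter fun j => y j ≠ w j).card = 1 then 1 else 0)
        * ((-Complex.I / 2) * ((((D:ℂ) - 2 * wt w)) - ((D:ℂ) - 2 * wt y))) := by
    intro w
    simp only [imagAdjMat, Matrix.smul_apply, Matrix.sub_apply, Matrix.mul_apply]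
    rw [show ∀ s : ℂ, (-Complex.I/2) • s = (-Complex.I/2) * s from fun s => rfl]
    simp only [dualAdjMat]
    rw [show (∑ x, adjMat D y x * Matrix.diagonal (fun y => (D : ℂ) - 2 * (wt y : ℂ)) x w)
        = adjMat D y w * ((D:ℂ) - 2 * wt w) from by
      rw [← Matrix.mul_apply, Matrix.mul_diagonal]]
    rw [show (∑ x, Matrix.diagonal (fun y => (D : ℂ) - 2 * (wt y : ℂ)) y x * adjMat D x w)
        = ((D:ℂ) - 2 * wt y) * adjMat D y w from by
      rw [← Matrix.mul_apply, Matrix.diagonal_mul]]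
    simp only [adjMat]
    ring
  -- LHS: sum over neighbours of y
  rw [Matrix.mul_apply]
  simp only [hent, ite_mul, one_mul, zero_mul]
  rw [← Finset.sum_filter]
  have hset : (Finset.univ.filter fun w : Vtx D =>
      (Finset.univ.filter fun j => y j ≠ w j).card = 1)
      = Finset.univ.image (fun k => flp k y) := by
    ext w
    simp only [Finset.mem_filter, Finset.mem_univ, true_and, Finset.mem_image]
    constructor
    · intro h
      obtain ⟨k, rfl⟩ := hamming_one y w h
      exact ⟨k, rfl⟩
    · rintro ⟨k, rfl⟩
      rw [filter_flp]
      simp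
  rw [hset, Finset.sum_image (fun k _ k' _ h => by
    by_contra hkk
    have h1 : flp k y k = !y k := flp_apply_self k y
    have h2 : flp k' y k = y k := flp_apply_ne y (by simpa using hkk)
    rw [h] at h1
    rw [h2] at h1
    cases y k <;> simp_all)]
  -- RHS
  rw [Matrix.mul_apply, show (∑ x, Pmat D y x * dualAdjMat D x z)
      = Pmat D y z * ((D:ℂ) - 2 * wt z) from by
    rw [← Matrix.mul_apply, show dualAdjMat D = Matrix.diagonal
      (fun y => (D : ℂ) - 2 * (wt y : ℂ)) from rfl, Matrix.mul_diagonal]]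
  have hz : ((D:ℂ) - 2 * wt z) = ∑ k : Fin D, (if z k then (-1:ℂ) else 1) := by
    have : ∀ k : Fin D, (if z k then (-1:ℂ) else 1)
        = 1 - 2 * (if z k = true then (1:ℂ) else 0) := by
      intro k; cases z k <;> simp <;> ring
    simp only [this]
    rw [Finset.sum_sub_distrib, ← Finset.mul_sum, Finset.sum_boole]
    simp [wt, Finset.card_univ]
  rw [hz, Finset.mul_sum]
  refine Finset.sum_congr rfl fun k _ => ?_
  -- per-coordinate identity
  have hwt : (wt (flp k y) : ℂ) = if y k then (wt y : ℂ) - 1 else (wt y : ℂ) + 1 := by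
    have h := wt_flp k y
    cases hyk : y k <;> rw [hyk] at h <;> simp only [if_true, if_false,
      Bool.false_eq_true, reduceIte] at h ⊢
    · have hn : wt (flp k y) = wt y + 1 := by omega
      rw [hn]; push_cast; ring
    · have hn : wt y = wt (flp k y) + 1 := by omega
      rw [hn]; push_cast; ring
  have hP : ∀ v : Vtx D, Pmat D v z = P1 (v k) (z k) * ∏ j ∈ Finset.univ.erase k,
      P1 (v j) (z j) := fun v => (Finset.mul_prod_erase Finset.univ _ (Finset.mem_univ k)).symm
  rw [hP (flp k y), hP y]
  have hrest : (∏ j ∈ Finset.univ.erase k, P1 (flp k y j) (z j))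
      = ∏ j ∈ Finset.univ.erase k, P1 (y j) (z j) :=
    Finset.prod_congr rfl fun j hj => by rw [flp_apply_ne y (Finset.mem_erase.mp hj).1]
  rw [hrest, flp_apply_self]
  rw [hwt]
  cases hyk : y k <;> cases hzk : z k <;>
    · simp only [P1, if_true, if_false, Bool.false_eq_true]
      ring_nf
      simp [Complex.I_sq]
      try ring

lemma wt_le (D : ℕ) (y : Vtx D) : wt y ≤ D := by
  have := Finset.card_filter_le Finset.univ (fun k => y k = true)
  simpa [wt] using this

lemma card_wt (D i : ℕ) : Fintype.card {y : Vtx D // wt y = i} = D.choose i := by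
  rw [Fintype.card_subtype]
  have h : (Finset.powersetCard i (Finset.univ : Finset (Fin D))).card = D.choose i := by
    rw [Finset.card_powersetCard]; simp
  rw [← h]
  refine Finset.card_nbij' (fun y => Finset.univ.filter (fun k => y k = true))
    (fun s => fun k => decide (k ∈ s)) ?_ ?_ ?_ ?_
  · intro y hy
    simp only [Finset.mem_coe, Finset.mem_filter, Finset.mem_univ, true_and] at hy
    simp [Finset.mem_powersetCard, ← hy, wt]
  · intro s hs
    simp only [Finset.mem_coe, Finset.mem_powersetCard] at hs
    simp only [Finset.mem_coe, Finset.mem_filter, Finset.mem_univ, true_and, wt, ← hs.2]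
    congr 1
    ext k
    simp
  · intro y _
    funext k
    simp
  · intro s _
    ext k
    simp

/-- The linear equivalence given by multiplication by `Pmat D`. -/
def Pequiv (D : ℕ) : (Vtx D → ℂ) ≃ₗ[ℂ] (Vtx D → ℂ) :=
  LinearEquiv.ofLinear (Pmat D).mulVecLin (Qmat D).mulVecLin
    (by rw [← Matrix.mulVecLin_mul, hPQ, Matrix.mulVecLin_one])
    (by rw [← Matrix.mulVecLin_mul, QP, Matrix.mulVecLin_one])

lemma imag_conj (D : ℕ) :
    (imagAdjMat D).mulVecLin = (Pequiv D).conj (dualAdjMat D).mulVecLin := by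
  have h : imagAdjMat D = Pmat D * dualAdjMat D * Qmat D := by
    calc imagAdjMat D = imagAdjMat D * (Pmat D * Qmat D) := by rw [hPQ, mul_one]
    _ = imagAdjMat D * Pmat D * Qmat D := by rw [mul_assoc]
    _ = Pmat D * dualAdjMat D * Qmat D := by rw [key_identity]
  rw [h, Matrix.mulVecLin_mul, Matrix.mulVecLin_mul]
  ext v
  simp [Pequiv, LinearEquiv.conj_apply]

lemma eigenspace_conj {M : Type*} [AddCommGroup M] [Module ℂ M]
    (e : M ≃ₗ[ℂ] M) (g : Module.End ℂ M) (μ : ℂ) :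
    Module.End.eigenspace (e.conj g) μ
      = (Module.End.eigenspace g μ).map (e : M →ₗ[ℂ] M) := by
  ext v
  rw [Module.End.mem_eigenspace_iff, Submodule.mem_map_equiv, Module.End.mem_eigenspace_iff]
  rw [show (e.conj g) v = e (g (e.symm v)) from by simp [LinearEquiv.conj_apply]]
  constructor
  · intro h
    have := congrArg e.symm h
    simpa using this
  · intro h
    rw [h]
    simp

lemma dual_eigenspace (D : ℕ) (μ : ℂ) :
    Module.End.eigenspace ((dualAdjMat D).mulVecLin : Module.End ℂ (Vtx D → ℂ)) μ
      = LinearMap.ker (Matrix.diagonal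
          (fun y : Vtx D => ((D:ℂ) - 2 * (wt y : ℂ)) - μ)).mulVecLin := by
  ext v
  rw [Module.End.mem_eigenspace_iff, LinearMap.mem_ker]
  constructor
  · intro h
    funext y
    have hy := congrFun h y
    simp only [Matrix.mulVecLin_apply, dualAdjMat, Matrix.mulVec_diagonal, Pi.smul_apply,
      smul_eq_mul] at hy
    simp only [Matrix.mulVecLin_apply, Matrix.mulVec_diagonal, Pi.zero_apply]
    rw [sub_mul, hy]; ring
  · intro h
    funext y
    have hy := congrFun h y
    simp only [Matrix.mulVecLin_apply, Matrix.mulVec_diagonal, Pi.zero_apply] at hy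
    simp only [Matrix.mulVecLin_apply, dualAdjMat, Matrix.mulVec_diagonal, Pi.smul_apply,
      smul_eq_mul]
    have h2 : ((D:ℂ) - 2 * (wt y : ℂ)) * v y - μ * v y = 0 := by rw [← hy]; ring
    exact sub_eq_zero.mp h2

lemma finrank_vtx (D : ℕ) : Module.finrank ℂ (Vtx D → ℂ) = 2 ^ D := by
  rw [Module.finrank_pi]
  simp

lemma dual_finrank (D i : ℕ) (hi : i ≤ D) :
    Module.finrank ℂ (Module.End.eigenspace
        ((dualAdjMat D).mulVecLin : Module.End ℂ (Vtx D → ℂ))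
      ((D:ℂ) - 2 * (i:ℂ))) = D.choose i := by
  rw [dual_eigenspace]
  have hiff : ∀ y : Vtx D,
      ((((D:ℂ) - 2 * (wt y:ℂ)) - ((D:ℂ) - 2 * (i:ℂ))) ≠ 0) ↔ wt y ≠ i := by
    intro y
    rw [sub_ne_zero]
    constructor
    · intro h hw; exact h (by rw [hw])
    · intro h hc
      apply h
      have h2 : (2:ℂ) * (wt y : ℂ) = 2 * (i:ℂ) := by linear_combination -hc
      have h3 : (wt y : ℂ) = (i : ℂ) := mul_left_cancel₀ two_ne_zero h2
      exact_mod_cast h3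
  have hrn := LinearMap.finrank_range_add_finrank_ker
    (Matrix.diagonal (fun y : Vtx D => ((D:ℂ) - 2 * (wt y:ℂ)) - ((D:ℂ) - 2 * (i:ℂ)))).mulVecLin
  have hrank : Module.finrank ℂ (LinearMap.range
      (Matrix.diagonal
        (fun y : Vtx D => ((D:ℂ) - 2 * (wt y:ℂ)) - ((D:ℂ) - 2 * (i:ℂ)))).mulVecLin)
      = Fintype.card {y : Vtx D // wt y ≠ i} := by
    have hr := Matrix.rank_diagonal
      (fun y : Vtx D => ((D:ℂ) - 2 * (wt y:ℂ)) - ((D:ℂ) - 2 * (i:ℂ)))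
    rw [Matrix.rank] at hr
    rw [hr]
    exact Fintype.card_congr (Equiv.subtypeEquivRight hiff)
  have hcard : Fintype.card (Vtx D) = 2 ^ D := by
    simp [Fintype.card_fun]
  have hcompl : Fintype.card {y : Vtx D // wt y ≠ i}
      = 2 ^ D - D.choose i := by
    calc Fintype.card {y : Vtx D // wt y ≠ i}
        = Fintype.card (Vtx D) - Fintype.card {y : Vtx D // wt y = i} :=
          Fintype.card_subtype_compl _
      _ = 2 ^ D - D.choose i := by rw [card_wt, hcard]
  have hch : D.choose i ≤ 2 ^ D := by
    rw [← card_wt D i]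
    have := Fintype.card_subtype_le (fun y : Vtx D => wt y = i)
    rw [hcard] at this
    exact this
  rw [finrank_vtx, hrank, hcompl] at hrn
  omega

lemma dual_hasEigenvalue_iff (D : ℕ) (μ : ℂ) :
    Module.End.HasEigenvalue ((dualAdjMat D).mulVecLin : Module.End ℂ (Vtx D → ℂ)) μ
      ↔ ∃ i ≤ D, μ = (D:ℂ) - 2 * (i:ℂ) := by
  rw [Module.End.hasEigenvalue_iff]
  constructor
  · intro h
    obtain ⟨v, hv, hv0⟩ := (Submodule.ne_bot_iff _).mp h
    rw [dual_eigenspace, LinearMap.mem_ker] at hv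
    obtain ⟨y, hy⟩ : ∃ y, v y ≠ 0 := by
      by_contra h0; push_neg at h0; exact hv0 (funext h0)
    have hvy := congrFun hv y
    simp only [Matrix.mulVecLin_apply, Matrix.mulVec_diagonal, Pi.zero_apply] at hvy
    have hdy : ((D:ℂ) - 2 * (wt y : ℂ)) - μ = 0 := by
      rcases mul_eq_zero.mp hvy with h' | h'
      · exact h'
      · exact absurd h' hy
    exact ⟨wt y, wt_le D y, by linear_combination -hdy⟩
  · rintro ⟨i, hi, rfl⟩
    obtain ⟨y⟩ : Nonempty {y : Vtx D // wt y = i} := by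
      rw [← Fintype.card_pos_iff, card_wt]
      exact Nat.choose_pos hi
    intro hbot
    rw [dual_eigenspace] at hbot
    have hmem : (Pi.single y.1 (1:ℂ)) ∈ LinearMap.ker (Matrix.diagonal
        (fun x : Vtx D => ((D:ℂ) - 2 * (wt x : ℂ)) - ((D:ℂ) - 2 * (i:ℂ)))).mulVecLin := by
      rw [LinearMap.mem_ker]
      funext x
      simp only [Matrix.mulVecLin_apply, Matrix.mulVec_diagonal, Pi.zero_apply]
      rcases eq_or_ne x y.1 with rfl | hxy
      · rw [y.2, Pi.single_eq_same]
        ring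
      · rw [Pi.single_eq_of_ne hxy]
        ring
    rw [hbot, Submodule.mem_bot] at hmem
    have := congrFun hmem y.1
    simp at this

lemma dual_sup (D : ℕ) :
    (⨆ i ∈ Finset.range (D + 1),
        Module.End.eigenspace ((dualAdjMat D).mulVecLin : Module.End ℂ (Vtx D → ℂ))
          ((D : ℂ) - 2 * (i : ℂ))) = ⊤ := by
  rw [eq_top_iff, ← (Pi.basisFun ℂ (Vtx D)).span_eq, Submodule.span_le]
  rintro - ⟨y, rfl⟩
  apply Submodule.mem_iSup_of_mem (wt y)
  apply Submodule.mem_iSup_of_mem (Finset.mem_range.mpr (Nat.lt_succ_of_le (wt_le D y)))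
  rw [Module.End.mem_eigenspace_iff]
  funext x
  simp only [Pi.basisFun_apply, Matrix.mulVecLin_apply, dualAdjMat, Matrix.mulVec_diagonal,
    Pi.smul_apply, smul_eq_mul]
  rcases eq_or_ne x y with rfl | hxy
  · rw [Pi.single_eq_same]
  · rw [Pi.single_eq_of_ne hxy]
    ring

/-- `Aᵉ` is diagonalizable: its eigenvalues are exactly `D - 2i` for
`0 ≤ i ≤ D`, the eigenspace for `D - 2i` has dimension `binom(D,i)`, and `ℂ^X` is the
(direct) sum of these eigenspaces. -/
theorem imagAdjMat_diagonalizable (D : ℕ) (hD : 0 < D) :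
    (∀ μ : ℂ, Module.End.HasEigenvalue
        ((imagAdjMat D).mulVecLin : Module.End ℂ (Vtx D → ℂ)) μ ↔
      ∃ i ≤ D, μ = (D : ℂ) - 2 * (i : ℂ)) ∧
    (∀ i ≤ D, Module.finrank ℂ
        (Module.End.eigenspace ((imagAdjMat D).mulVecLin : Module.End ℂ (Vtx D → ℂ))
          ((D : ℂ) - 2 * (i : ℂ))) = D.choose i) ∧
    (⨆ i ∈ Finset.range (D + 1),
        Module.End.eigenspace ((imagAdjMat D).mulVecLin : Module.End ℂ (Vtx D → ℂ))
          ((D : ℂ) - 2 * (i : ℂ))) = ⊤ := by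
  have hes : ∀ μ : ℂ,
      Module.End.eigenspace ((imagAdjMat D).mulVecLin : Module.End ℂ (Vtx D → ℂ)) μ
      = (Module.End.eigenspace ((dualAdjMat D).mulVecLin : Module.End ℂ (Vtx D → ℂ)) μ).map
          (Pequiv D : (Vtx D → ℂ) →ₗ[ℂ] (Vtx D → ℂ)) := by
    intro μ
    rw [imag_conj D]
    exact eigenspace_conj (Pequiv D) _ μ
  refine ⟨?_, ?_, ?_⟩
  · intro μ
    rw [← dual_hasEigenvalue_iff D μ, Module.End.hasEigenvalue_iff,
      Module.End.hasEigenvalue_iff, hes]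
    constructor
    · intro h hb
      exact h (by rw [hb, Submodule.map_bot])
    · intro h hb
      apply h
      rw [Submodule.eq_bot_iff]
      intro x hx
      have hmem : (Pequiv D) x ∈ (Module.End.eigenspace
          ((dualAdjMat D).mulVecLin : Module.End ℂ (Vtx D → ℂ)) μ).map
          (Pequiv D : (Vtx D → ℂ) →ₗ[ℂ] (Vtx D → ℂ)) := ⟨x, hx, rfl⟩
      rw [hb, Submodule.mem_bot] at hmem
      exact (Pequiv D).map_eq_zero_iff.mp hmem
  · intro i hi
    rw [hes, LinearEquiv.finrank_map_eq, dual_finrank D i hi]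
  · simp only [hes]
    have hmap : (⨆ i ∈ Finset.range (D + 1),
        (Module.End.eigenspace ((dualAdjMat D).mulVecLin : Module.End ℂ (Vtx D → ℂ))
          ((D : ℂ) - 2 * (i : ℂ))).map (Pequiv D : (Vtx D → ℂ) →ₗ[ℂ] (Vtx D → ℂ)))
        = ((⨆ i ∈ Finset.range (D + 1),
            Module.End.eigenspace ((dualAdjMat D).mulVecLin : Module.End ℂ (Vtx D → ℂ))
              ((D : ℂ) - 2 * (i : ℂ)))).map
            (Pequiv D : (Vtx D → ℂ) →ₗ[ℂ] (Vtx D → ℂ)) := by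
      simp_rw [Submodule.map_iSup]
    rw [hmap, dual_sup, Submodule.map_top, LinearEquiv.range]
end
end

section
/- For 0 ≤ i ≤ D the idempotents are cyclically conjugated by P: E*_i P = P E_i, E^ε_i P = P E*_i, and E_i P = P E^ε_i (equivalently E*_i = P E_i P⁻¹, E^ε_i = P E*_i P⁻¹, and E_i = P E^ε_i P⁻¹). -/
noncomputable section

open Matrix Finset

-- Kronecker multiplication lemma
def kron (D : ℕ) (M : Matrix Bool Bool ℂ) : Matrix (Vtx D) (Vtx D) ℂ :=
  fun y z => ∏ k : Fin D, M (y k) (z k)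

lemma kron_mul (D : ℕ) (M N : Matrix Bool Bool ℂ) :
    kron D M * kron D N = kron D (M * N) := by
  ext y z
  simp only [kron, Matrix.mul_apply, ← Finset.prod_mul_distrib]
  rw [Fintype.prod_sum]

lemma kron_one (D : ℕ) : kron D (1 : Matrix Bool Bool ℂ) = 1 := by
  ext y z
  simp only [kron, Matrix.one_apply]
  by_cases h : y = z
  · simp [h]
  · obtain ⟨k, hk⟩ : ∃ k, y k ≠ z k := by
      by_contra hc; push_neg at hc; exact h (funext hc)
    rw [if_neg h]
    exact Finset.prod_eq_zero (Finset.mem_univ k) (by simp [hk])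

lemma P1_cube : (Matrix.of P1) * (Matrix.of P1) * (Matrix.of P1) = (2 - 2*Complex.I) • 1 := by
  ext a b
  fin_cases a <;> fin_cases b <;>
    simp [Matrix.mul_apply, P1, Fin.sum_univ_succ, Matrix.one_apply] <;>
    first
      | linear_combination Complex.I_sq
      | linear_combination (-1:ℂ)*Complex.I_sq

lemma Pmat_eq_kron (D : ℕ) : Pmat D = kron D (Matrix.of P1) := rfl

lemma Pmat_cube (D : ℕ) :
    Pmat D * Pmat D * Pmat D = ((2 - 2*Complex.I)^D) • 1 := by
  rw [Pmat_eq_kron, kron_mul, kron_mul, P1_cube]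
  ext y z
  simp only [kron, Matrix.smul_apply, Matrix.one_apply, smul_eq_mul]
  rw [Finset.prod_mul_distrib, Finset.prod_const, Finset.card_univ]
  by_cases h : y = z
  · simp [h, Fintype.card_fun]
  · obtain ⟨k, hk⟩ : ∃ k, y k ≠ z k := by
      by_contra hc; push_neg at hc; exact h (funext hc)
    rw [if_neg h]
    have : (∏ k : Fin D, if y k = z k then (1:ℂ) else 0) = 0 :=
      Finset.prod_eq_zero (Finset.mem_univ k) (by simp [hk])
    rw [this]; ring

lemma c_ne_zero (D : ℕ) : ((2 - 2*Complex.I)^D) ≠ 0 := by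
  apply pow_ne_zero
  intro h
  have := congrArg Complex.re h
  simp [Complex.sub_re] at this

lemma Pmat_isUnit (D : ℕ) : IsUnit (Pmat D) := by
  have h := Pmat_cube D
  have : Pmat D * ((((2 - 2*Complex.I)^D)⁻¹) • (Pmat D * Pmat D)) = 1 := by
    rw [mul_smul_comm, ← mul_assoc, h, smul_smul, inv_mul_cancel₀ (c_ne_zero D), one_smul]
  exact (Matrix.isUnit_iff_isUnit_det _).mpr (Matrix.isUnit_det_of_right_inverse this)

-- sum of signs
lemma sgn_sum (D : ℕ) (y : Vtx D) :
    ∑ k : Fin D, (if y k = true then (-1:ℂ) else 1) = (D:ℂ) - 2 * (wt y : ℂ) := by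
  have h : ∀ k, (if y k = true then (-1:ℂ) else 1)
      = 1 - 2 * (if y k = true then (1:ℂ) else 0) := by
    intro k; by_cases h : y k = true <;> simp [h] <;> ring
  simp only [h]
  rw [Finset.sum_sub_distrib, Finset.sum_const, ← Finset.mul_sum, Finset.sum_boole]
  simp [wt, Finset.card_univ, mul_comm]

lemma Pmat_update (D : ℕ) (y z : Vtx D) (k : Fin D) :
    Pmat D y (Function.update z k (!z k))
      = (if y k = true then (-1:ℂ) else 1) * Pmat D y z := by
  unfold Pmat
  have h1 : (fun j : Fin D => P1 (y j) (Function.update z k (!z k) j))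
      = Function.update (fun j => P1 (y j) (z j)) k (P1 (y k) (!z k)) := by
    funext j
    by_cases hj : j = k
    · subst hj; simp
    · simp [Function.update_of_ne hj]
  calc ∏ j : Fin D, P1 (y j) (Function.update z k (!z k) j)
      = ∏ j : Fin D, Function.update (fun j => P1 (y j) (z j)) k (P1 (y k) (!z k)) j := by
        rw [h1]
    _ = P1 (y k) (!z k) * ∏ j ∈ Finset.univ.erase k, P1 (y j) (z j) := by
        rw [Finset.prod_update_of_mem (Finset.mem_univ k), Finset.sdiff_singleton_eq_erase]
    _ = ((if y k = true then (-1:ℂ) else 1) * P1 (y k) (z k))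
          * ∏ j ∈ Finset.univ.erase k, P1 (y j) (z j) := by
        congr 1
        cases hy : y k <;> cases hz : z k <;> simp [P1]
    _ = (if y k = true then (-1:ℂ) else 1) * ∏ j : Fin D, P1 (y j) (z j) := by
        rw [mul_assoc,
          Finset.mul_prod_erase Finset.univ (fun j => P1 (y j) (z j)) (Finset.mem_univ k)]

lemma dual_mul_P (D : ℕ) : dualAdjMat D * Pmat D = Pmat D * adjMat D := by
  ext y z
  rw [dualAdjMat, Matrix.diagonal_mul, Matrix.mul_apply]
  have hsum : ∑ w : Vtx D, Pmat D y w * adjMat D w z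
      = ∑ w ∈ Finset.univ.filter
          (fun w : Vtx D => (Finset.univ.filter fun k => w k ≠ z k).card = 1), Pmat D y w := by
    rw [Finset.sum_filter]
    apply Finset.sum_congr rfl
    intro w _
    by_cases h : (Finset.univ.filter fun k => w k ≠ z k).card = 1 <;> simp [adjMat, h]
  rw [hsum]
  rw [show ∑ w ∈ Finset.univ.filter
        (fun w : Vtx D => (Finset.univ.filter fun k => w k ≠ z k).card = 1), Pmat D y w
      = ∑ k : Fin D, (if y k = true then (-1:ℂ) else 1) * Pmat D y z from ?_]
  · rw [← Finset.sum_mul, sgn_sum]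
  · refine (Finset.sum_bij (fun (k : Fin D) _ => Function.update z k (!z k)) ?_ ?_ ?_ ?_).symm
    · intro k _
      simp only [Finset.mem_filter, Finset.mem_univ, true_and]
      rw [show (Finset.univ.filter fun j => Function.update z k (!z k) j ≠ z j) = {k} from ?_]
      · simp
      · ext j
        simp only [Finset.mem_filter, Finset.mem_univ, true_and, Finset.mem_singleton]
        constructor
        · intro hj
          by_contra hjk
          exact hj (by simp [Function.update_of_ne hjk])
        · intro hj; subst hj; simp
    · intro k _ k' _ h
      by_contra hkk
      have := congrFun h k
      rw [Function.update_of_ne hkk] at this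
      simp at this
    · intro w hw
      simp only [Finset.mem_filter, Finset.mem_univ, true_and] at hw
      obtain ⟨k, hk⟩ := Finset.card_eq_one.mp hw
      refine ⟨k, Finset.mem_univ k, ?_⟩
      have hkmem : w k ≠ z k := by
        have : k ∈ Finset.univ.filter fun j => w j ≠ z j := hk ▸ Finset.mem_singleton_self k
        simpa using this
      show Function.update z k (!z k) = w
      funext j
      by_cases hj : j = k
      · subst hj
        rw [Function.update_self]
        cases hz : z j <;> cases hwj : w j <;> simp_all
      · rw [Function.update_of_ne hj]
        by_contra hne
        have : j ∈ Finset.univ.filter fun j => w j ≠ z j := by simpa using Ne.symm hne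
        rw [hk] at this
        exact hj (Finset.mem_singleton.mp this)
    · intro k _
      exact (Pmat_update D y z k).symm

-- intertwining extends to polynomials
lemma intertwine {n : Type*} [Fintype n] [DecidableEq n] (M N Q : Matrix n n ℂ)
    (h : N * Q = Q * M) (p : Polynomial ℂ) :
    Polynomial.aeval N p * Q = Q * Polynomial.aeval M p := by
  induction p using Polynomial.induction_on' with
  | add p q hp hq => simp only [map_add, add_mul, mul_add, hp, hq]
  | monomial m a =>
    have hpow : ∀ j : ℕ, N ^ j * Q = Q * M ^ j := by
      intro j; induction j with
      | zero => simp
      | succ j ih => rw [pow_succ, pow_succ, mul_assoc, h, ← mul_assoc, ih, mul_assoc]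
    simp only [Polynomial.aeval_monomial]
    rw [mul_assoc, hpow, ← mul_assoc, Algebra.commutes, mul_assoc]

lemma aeval_diagonal {n : Type*} [Fintype n] [DecidableEq n] (d : n → ℂ) (p : Polynomial ℂ) :
    Polynomial.aeval (Matrix.diagonal d) p = Matrix.diagonal (fun y => p.eval (d y)) := by
  rw [show Matrix.diagonal d = Matrix.diagonalAlgHom ℂ d from rfl,
    Polynomial.aeval_algHom_apply, Matrix.diagonalAlgHom_apply]
  refine congrArg Matrix.diagonal (funext fun y => ?_)
  rw [← Polynomial.coe_aeval_eq_eval]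
  exact (Polynomial.aeval_algHom_apply (Pi.evalAlgHom ℂ (fun _ => ℂ) y) d p).symm

lemma theta_injective (D : ℕ) {a b : ℕ} (h : theta D a = theta D b) : a = b := by
  unfold theta at h
  have h2 : (a : ℂ) = (b : ℂ) := by linear_combination -h/2
  exact_mod_cast h2

lemma lagrange_eval (D i : ℕ) (hi : i ≤ D) (m : ℕ) (hm : m ≤ D) :
    Polynomial.eval (theta D m)
      (∏ j ∈ (Finset.range (D + 1)).erase i,
        Polynomial.C ((theta D i - theta D j)⁻¹) * (Polynomial.X - Polynomial.C (theta D j)))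
      = if m = i then 1 else 0 := by
  rw [Polynomial.eval_prod]
  by_cases h : m = i
  · subst h
    rw [if_pos rfl]
    apply Finset.prod_eq_one
    intro j hj
    have hji : j ≠ m := Finset.ne_of_mem_erase hj
    simp only [Polynomial.eval_mul, Polynomial.eval_C, Polynomial.eval_sub, Polynomial.eval_X]
    rw [inv_mul_cancel₀]
    intro hc
    exact hji (theta_injective D (sub_eq_zero.mp hc)).symm
  · rw [if_neg h]
    exact Finset.prod_eq_zero
      (Finset.mem_erase.mpr ⟨h, Finset.mem_range.mpr (Nat.lt_succ_of_le hm)⟩)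
      (by simp [Polynomial.eval_mul])

lemma Estar_eq_aeval (D i : ℕ) (hi : i ≤ D) :
    EstarMat D i = Polynomial.aeval (dualAdjMat D)
      (∏ j ∈ (Finset.range (D + 1)).erase i,
        Polynomial.C ((theta D i - theta D j)⁻¹) * (Polynomial.X - Polynomial.C (theta D j))) := by
  rw [dualAdjMat, aeval_diagonal]
  unfold EstarMat
  refine congrArg Matrix.diagonal (funext fun y => ?_)
  exact (lagrange_eval D i hi (wt y) (wt_le D y)).symm


/-- For `0 ≤ i ≤ D` the idempotents are cyclically conjugated by `P`:
`E*_i P = P E_i`, `Eᵉ_i P = P E*_i`, `E_i P = P Eᵉ_i`. -/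
theorem idempotents_cyclic_conjugation (D : ℕ) (hD : 0 < D) (i : ℕ) (hi : i ≤ D) :
    EstarMat D i * Pmat D = Pmat D * Emat D i ∧
    EepsMat D i * Pmat D = Pmat D * EstarMat D i ∧
    Emat D i * Pmat D = Pmat D * EepsMat D i := by
  have hdet : IsUnit (Pmat D).det := (Matrix.isUnit_iff_isUnit_det _).mp (Pmat_isUnit D)
  have hPinv : Pmat D * (Pmat D)⁻¹ = 1 := Matrix.mul_nonsing_inv _ hdet
  have hPinv' : (Pmat D)⁻¹ * Pmat D = 1 := Matrix.nonsing_inv_mul _ hdet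
  have h1 : EstarMat D i * Pmat D = Pmat D * Emat D i := by
    rw [Estar_eq_aeval D i hi]
    exact intertwine _ _ _ (dual_mul_P D) _
  have cancelR : ∀ X Y : Matrix (Vtx D) (Vtx D) ℂ, X * Pmat D = Y * Pmat D → X = Y := by
    intro X Y h
    have := congrArg (fun M => M * (Pmat D)⁻¹) h
    simpa [mul_assoc, hPinv] using this
  have cancelL : ∀ X Y : Matrix (Vtx D) (Vtx D) ℂ, Pmat D * X = Pmat D * Y → X = Y := by
    intro X Y h
    have := congrArg (fun M => (Pmat D)⁻¹ * M) h
    simpa [← mul_assoc, hPinv'] using this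
  have key : Emat D i * (Pmat D * Pmat D) = (Pmat D * Pmat D) * EstarMat D i := by
    apply cancelR
    have lhs : Emat D i * (Pmat D * Pmat D) * Pmat D
        = ((2 - 2*Complex.I)^D) • Emat D i := by
      rw [mul_assoc, Pmat_cube, mul_smul_comm, mul_one]
    have rhs : (Pmat D * Pmat D) * EstarMat D i * Pmat D
        = ((2 - 2*Complex.I)^D) • Emat D i := by
      rw [mul_assoc, h1, ← mul_assoc, Pmat_cube, smul_mul_assoc, one_mul]
    rw [lhs, rhs]
  refine ⟨h1, ?_, ?_⟩
  · apply cancelL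
    show Pmat D * (EepsMat D i * Pmat D) = Pmat D * (Pmat D * EstarMat D i)
    simp only [EepsMat, ← mul_assoc]
    rw [hPinv, one_mul, mul_assoc]
    exact key
  · unfold EepsMat
    rw [← mul_assoc, ← mul_assoc, hPinv, one_mul]
end
end

section
/- Let W denote an irreducible T-module. Then dim(E^ε_i W) ≤ 1 for 0 ≤ i ≤ D. -/
noncomputable section

open Matrix Finset

namespace HC

variable {D : ℕ}

/-- flip coordinate j -/
def flip (j : Fin D) (z : Vtx D) : Vtx D := fun k => if k = j then !(z k) else z k

lemma flip_apply_self (j : Fin D) (z : Vtx D) : flip j z j = !(z j) := by simp [flip]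

lemma flip_apply_ne (j k : Fin D) (z : Vtx D) (h : k ≠ j) : flip j z k = z k := by
  simp [flip, h]

lemma flip_inj (z : Vtx D) : Function.Injective (fun j => flip j z) := by
  intro j j' h
  by_contra hne
  have := congrFun h j
  simp only at this
  rw [flip_apply_self, flip_apply_ne j' j z hne] at this
  simp at this

lemma card_filter_flip (j : Fin D) (z : Vtx D) :
    (Finset.univ.filter fun k => flip j z k ≠ z k).card = 1 := by
  have : (Finset.univ.filter fun k => flip j z k ≠ z k) = {j} := by
    ext k
    simp only [Finset.mem_filter, Finset.mem_univ, true_and, Finset.mem_singleton]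
    constructor
    · intro h
      by_contra hk
      exact h (flip_apply_ne j k z hk)
    · rintro rfl
      rw [flip_apply_self]; simp
  rw [this, Finset.card_singleton]

lemma eq_flip_of_card (w z : Vtx D)
    (h : (Finset.univ.filter fun k => w k ≠ z k).card = 1) : ∃ j, w = flip j z := by
  obtain ⟨j, hj⟩ := Finset.card_eq_one.mp h
  refine ⟨j, funext fun k => ?_⟩
  by_cases hk : k = j
  · subst hk
    have : w k ≠ z k := by
      have : k ∈ Finset.univ.filter fun k => w k ≠ z k := hj ▸ Finset.mem_singleton_self k
      simpa using this
    rw [flip_apply_self]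
    revert this; cases w k <;> cases z k <;> simp
  · have : w k = z k := by
      by_contra hne
      have : k ∈ ({j} : Finset (Fin D)) := hj ▸ (by simpa using hne)
      simp at this; exact hk this
    rw [flip_apply_ne j k z hk, this]

lemma sum_flip (z : Vtx D) (f : Vtx D → ℂ) :
    (∑ w : Vtx D, if (Finset.univ.filter fun k => w k ≠ z k).card = 1 then f w else 0)
      = ∑ j : Fin D, f (flip j z) := by
  rw [← Finset.sum_filter]
  have himg : (Finset.univ.filter fun w : Vtx D =>
      (Finset.univ.filter fun k => w k ≠ z k).card = 1)
      = Finset.image (fun j => flip j z) Finset.univ := by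
    ext w
    simp only [Finset.mem_filter, Finset.mem_univ, true_and, Finset.mem_image]
    constructor
    · intro h; obtain ⟨j, rfl⟩ := eq_flip_of_card w z h; exact ⟨j, rfl⟩
    · rintro ⟨j, rfl⟩; exact card_filter_flip j z
  rw [himg, Finset.sum_image (fun a _ b _ h => flip_inj z h)]


lemma P1_ne_zero (a b : Bool) : P1 a b ≠ 0 := by
  cases a <;> cases b <;> simp [P1, Complex.I_ne_zero]

def eps (a : Bool) : ℂ := if a then -1 else 1

lemma P1_flip_right (a b : Bool) : P1 a (!b) = eps a * P1 a b := by
  cases a <;> cases b <;> simp [P1, eps] <;> ring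

lemma P1_flip_left (a b : Bool) :
    P1 (!a) b = -Complex.I * (eps b * P1 a (!b)) := by
  cases a <;> cases b <;> simp [P1, eps] <;> ring_nf <;> simp [Complex.I_sq]

lemma wt_le (y : Vtx D) : wt y ≤ D := by
  have := Finset.card_filter_le (Finset.univ : Finset (Fin D)) (fun k => y k = true)
  simpa [wt] using this

lemma d_eq_sum (y : Vtx D) : (D : ℂ) - 2 * (wt y : ℂ) = ∑ j : Fin D, eps (y j) := by
  have : ∑ j : Fin D, eps (y j)
      = ∑ j : Fin D, ((1 : ℂ) - 2 * (if y j = true then 1 else 0)) := by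
    apply Finset.sum_congr rfl
    intro j _
    cases h : y j <;> simp [eps] <;> ring
  rw [this, Finset.sum_sub_distrib, ← Finset.mul_sum, Finset.sum_boole]
  simp [wt, Finset.card_univ]

/-- split the Kronecker product at the flipped coordinate (second argument) -/
lemma Pmat_flip_right (y z : Vtx D) (j : Fin D) :
    Pmat D y (flip j z) = eps (y j) * Pmat D y z := by
  unfold Pmat
  rw [← Finset.mul_prod_erase Finset.univ _ (Finset.mem_univ j),
      ← Finset.mul_prod_erase Finset.univ (fun k => P1 (y k) (z k)) (Finset.mem_univ j)]
  rw [flip_apply_self, P1_flip_right]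
  rw [Finset.prod_congr rfl (fun k hk => by
    rw [flip_apply_ne j k z (Finset.ne_of_mem_erase hk)])]
  ring

lemma Pmat_flip_left (y z : Vtx D) (j : Fin D) :
    Pmat D (flip j y) z = -Complex.I * (eps (z j) * Pmat D y (flip j z)) := by
  unfold Pmat
  rw [← Finset.mul_prod_erase Finset.univ _ (Finset.mem_univ j),
      ← Finset.mul_prod_erase Finset.univ (fun k => P1 (y k) ((flip j z) k)) (Finset.mem_univ j)]
  rw [flip_apply_self, flip_apply_self, P1_flip_left]
  have h1 : ∀ k ∈ Finset.univ.erase j, P1 ((flip j y) k) (z k) = P1 (y k) (z k) := by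
    intro k hk; rw [flip_apply_ne j k y (Finset.ne_of_mem_erase hk)]
  have h2 : ∀ k ∈ Finset.univ.erase j, P1 (y k) ((flip j z) k) = P1 (y k) (z k) := by
    intro k hk; rw [flip_apply_ne j k z (Finset.ne_of_mem_erase hk)]
  rw [Finset.prod_congr rfl h1, Finset.prod_congr rfl h2]
  ring

/-- I4 : A* P = P A -/
lemma dual_P : dualAdjMat D * Pmat D = Pmat D * adjMat D := by
  ext y z
  rw [Matrix.mul_apply, Matrix.mul_apply]
  have lhs : ∑ w, dualAdjMat D y w * Pmat D w z
      = ((D : ℂ) - 2 * (wt y : ℂ)) * Pmat D y z := by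
    rw [Finset.sum_eq_single y]
    · simp [dualAdjMat, Matrix.diagonal_apply_eq]
    · intro w _ hw; simp [dualAdjMat, Matrix.diagonal_apply_ne' _ hw]
    · simp
  rw [lhs]
  have rhs : ∑ w, Pmat D y w * adjMat D w z = ∑ j, Pmat D y (flip j z) := by
    rw [← sum_flip z (fun w => Pmat D y w)]
    apply Finset.sum_congr rfl
    intro w _
    simp only [adjMat]
    split <;> simp
  rw [rhs]
  simp only [Pmat_flip_right]
  rw [← Finset.sum_mul, ← d_eq_sum]

/-- I3 : A P = P Aᵉ -/
lemma adj_P : adjMat D * Pmat D = Pmat D * imagAdjMat D := by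
  ext y z
  rw [Matrix.mul_apply, Matrix.mul_apply]
  have lhs : ∑ w, adjMat D y w * Pmat D w z = ∑ j, Pmat D (flip j y) z := by
    rw [← sum_flip y (fun w => Pmat D w z)]
    apply Finset.sum_congr rfl
    intro w _
    have : (Finset.univ.filter fun k => y k ≠ w k).card
        = (Finset.univ.filter fun k => w k ≠ y k).card := by
      congr 1; apply Finset.filter_congr; intro k _; simp [ne_comm]
    simp only [adjMat, this]
    split <;> simp
  have hAe : ∀ w, imagAdjMat D w z
      = (-Complex.I/2) * (adjMat D w z *
          (((D:ℂ) - 2 * (wt z : ℂ)) - ((D:ℂ) - 2 * (wt w : ℂ)))) := by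
    intro w
    simp only [imagAdjMat, Matrix.smul_apply, Matrix.sub_apply, Matrix.mul_diagonal,
      Matrix.diagonal_mul, dualAdjMat, smul_eq_mul]
    ring
  have rhs : ∑ w, Pmat D y w * imagAdjMat D w z
      = ∑ j, Pmat D y (flip j z) * ((-Complex.I/2) *
          (((D:ℂ) - 2 * (wt z : ℂ)) - ((D:ℂ) - 2 * (wt (flip j z) : ℂ)))) := by
    rw [← sum_flip z (fun w => Pmat D y w * ((-Complex.I/2) *
          (((D:ℂ) - 2 * (wt z : ℂ)) - ((D:ℂ) - 2 * (wt w : ℂ)))))]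
    apply Finset.sum_congr rfl
    intro w _
    rw [hAe w]
    simp only [adjMat]
    split <;> ring
  rw [lhs, rhs]
  apply Finset.sum_congr rfl
  intro j _
  have hd : ((D:ℂ) - 2 * (wt z : ℂ)) - ((D:ℂ) - 2 * (wt (flip j z) : ℂ))
      = 2 * eps (z j) := by
    rw [d_eq_sum, d_eq_sum, ← Finset.sum_sub_distrib]
    rw [Finset.sum_eq_single j]
    · rw [flip_apply_self]; cases z j <;> simp [eps] <;> ring
    · intro k _ hk; rw [flip_apply_ne j k z hk]; ring
    · simp
  rw [hd, Pmat_flip_left]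
  ring

/-- Kronecker-power multiplication -/
lemma kron_mul (f g : Bool → Bool → ℂ) :
    (Matrix.of fun y z : Vtx D => ∏ k, f (y k) (z k)) *
      (Matrix.of fun y z : Vtx D => ∏ k, g (y k) (z k))
      = Matrix.of fun y z => ∏ k, (∑ b, f (y k) b * g b (z k)) := by
  ext y z
  rw [Matrix.mul_apply]
  simp only [Matrix.of_apply]
  have : ∀ w : Vtx D, (∏ k, f (y k) (w k)) * (∏ k, g (w k) (z k))
      = ∏ k, (fun (k : Fin D) (b : Bool) => f (y k) b * g b (z k)) k (w k) := by
    intro w; rw [← Finset.prod_mul_distrib]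
  simp_rw [this]
  rw [Finset.prod_univ_sum]
  apply Finset.sum_congr
  · ext w
    simp [Fintype.mem_piFinset]
  · intros; rfl

lemma Pmat_of : Pmat D = Matrix.of fun y z : Vtx D => ∏ k, P1 (y k) (z k) := rfl

lemma Pmat_cube : Pmat D * Pmat D * Pmat D
    = ((2 - 2*Complex.I)^D : ℂ) • (1 : Matrix (Vtx D) (Vtx D) ℂ) := by
  rw [Pmat_of, kron_mul P1 P1, kron_mul (fun a b => ∑ c, P1 a c * P1 c b) P1]
  have hentry : ∀ a d : Bool, (∑ b, (∑ c, P1 a c * P1 c b) * P1 b d)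
      = if a = d then (2 - 2*Complex.I) else 0 := by
    intro a d
    cases a <;> cases d <;> simp [Fin.sum_univ_succ, P1, Complex.I_sq] <;> ring_nf <;> simp [Complex.I_sq] <;> ring
  ext y z
  simp only [Matrix.of_apply]
  simp_rw [hentry]
  by_cases h : y = z
  · subst h
    simp [Matrix.one_apply_eq]
  · have : ∃ k, y k ≠ z k := by
      by_contra hc; push_neg at hc; exact h (funext hc)
    obtain ⟨k, hk⟩ := this
    rw [Finset.prod_eq_zero (Finset.mem_univ k) (by simp [hk])]
    simp [Matrix.one_apply_ne h]

lemma c_ne : ((2 - 2*Complex.I)^D : ℂ) ≠ 0 := by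
  apply pow_ne_zero
  intro h
  have := congrArg Complex.re h
  simp at this

def Qmat (D : ℕ) : Matrix (Vtx D) (Vtx D) ℂ :=
  (((2 - 2*Complex.I)^D : ℂ)⁻¹) • (Pmat D * Pmat D)

lemma QP : Qmat D * Pmat D = 1 := by
  unfold Qmat
  rw [Matrix.smul_mul, Pmat_cube, smul_smul, inv_mul_cancel₀ c_ne, one_smul]

lemma PQ : Pmat D * Qmat D = 1 := by
  unfold Qmat
  rw [Matrix.mul_smul, ← mul_assoc, Pmat_cube, smul_smul, inv_mul_cancel₀ c_ne, one_smul]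

lemma Pinv : (Pmat D)⁻¹ = Qmat D := Matrix.inv_eq_right_inv PQ

lemma conjA : Qmat D * adjMat D * Pmat D = imagAdjMat D := by
  rw [mul_assoc, adj_P, ← mul_assoc, QP, one_mul]

lemma conjAs : Qmat D * dualAdjMat D * Pmat D = adjMat D := by
  rw [mul_assoc, dual_P, ← mul_assoc, QP, one_mul]

lemma dual_eq : dualAdjMat D = Pmat D * adjMat D * Qmat D := by
  rw [← dual_P, mul_assoc, PQ, mul_one]

lemma imag_P : imagAdjMat D * Pmat D = Pmat D * dualAdjMat D := by
  rw [← conjA, dual_eq]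
  unfold Qmat
  simp only [Matrix.smul_mul, Matrix.mul_smul]
  congr 1
  noncomm_ring

lemma dual_eq2 : dualAdjMat D = Qmat D * imagAdjMat D * Pmat D := by
  rw [mul_assoc, imag_P, ← mul_assoc, QP, one_mul]

lemma conj_mul (X Y : Matrix (Vtx D) (Vtx D) ℂ) :
    (Qmat D * X * Pmat D) * (Qmat D * Y * Pmat D) = Qmat D * (X*Y) * Pmat D := by
  have h : Pmat D * (Qmat D * (Y * Pmat D)) = Y * Pmat D := by
    rw [← mul_assoc, PQ, one_mul]
  simp only [mul_assoc, h]

lemma comm_base : adjMat D * dualAdjMat D - dualAdjMat D * adjMat D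
    = (2*Complex.I) • imagAdjMat D := by
  unfold imagAdjMat
  rw [smul_smul]
  have h : (2*Complex.I) * (-Complex.I/2) = 1 := by
    field_simp
    linear_combination -Complex.I_sq
  rw [h, one_smul]

lemma commMA : imagAdjMat D * adjMat D - adjMat D * imagAdjMat D
    = (2*Complex.I) • dualAdjMat D := by
  calc imagAdjMat D * adjMat D - adjMat D * imagAdjMat D
      = (Qmat D * adjMat D * Pmat D) * (Qmat D * dualAdjMat D * Pmat D)
        - (Qmat D * dualAdjMat D * Pmat D) * (Qmat D * adjMat D * Pmat D) := by
        rw [conjA, conjAs]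
    _ = Qmat D * (adjMat D * dualAdjMat D - dualAdjMat D * adjMat D) * Pmat D := by
        rw [conj_mul, conj_mul, Matrix.mul_sub, Matrix.sub_mul]
    _ = Qmat D * ((2*Complex.I) • imagAdjMat D) * Pmat D := by rw [comm_base]
    _ = (2*Complex.I) • (Qmat D * imagAdjMat D * Pmat D) := by
        simp [Matrix.mul_smul, Matrix.smul_mul]
    _ = (2*Complex.I) • dualAdjMat D := by rw [← dual_eq2]

lemma commMAs : dualAdjMat D * imagAdjMat D - imagAdjMat D * dualAdjMat D
    = (2*Complex.I) • adjMat D := by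
  calc dualAdjMat D * imagAdjMat D - imagAdjMat D * dualAdjMat D
      = (Qmat D * imagAdjMat D * Pmat D) * (Qmat D * adjMat D * Pmat D)
        - (Qmat D * adjMat D * Pmat D) * (Qmat D * imagAdjMat D * Pmat D) := by
        rw [conjA, ← dual_eq2]
    _ = Qmat D * (imagAdjMat D * adjMat D - adjMat D * imagAdjMat D) * Pmat D := by
        rw [conj_mul, conj_mul, Matrix.mul_sub, Matrix.sub_mul]
    _ = Qmat D * ((2*Complex.I) • dualAdjMat D) * Pmat D := by rw [commMA]
    _ = (2*Complex.I) • (Qmat D * dualAdjMat D * Pmat D) := by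
        simp [Matrix.mul_smul, Matrix.smul_mul]
    _ = (2*Complex.I) • adjMat D := by rw [conjAs]

def Rp (D : ℕ) : Matrix (Vtx D) (Vtx D) ℂ := dualAdjMat D - Complex.I • adjMat D
def Rm (D : ℕ) : Matrix (Vtx D) (Vtx D) ℂ := dualAdjMat D + Complex.I • adjMat D

lemma MRp : imagAdjMat D * Rp D = Rp D * imagAdjMat D + (2:ℂ) • Rp D := by
  have h1 := commMA (D := D)
  have h2 := commMAs (D := D)
  have e1 : imagAdjMat D * adjMat D
      = adjMat D * imagAdjMat D + (2*Complex.I) • dualAdjMat D := by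
    rw [← h1]; abel
  have e2 : dualAdjMat D * imagAdjMat D
      = imagAdjMat D * dualAdjMat D + (2*Complex.I) • adjMat D := by
    rw [← h2]; abel
  unfold Rp
  rw [Matrix.mul_sub, Matrix.sub_mul, Matrix.mul_smul, Matrix.smul_mul, e1]
  have e2' : imagAdjMat D * dualAdjMat D
      = dualAdjMat D * imagAdjMat D - (2*Complex.I) • adjMat D := by
    rw [e2]; abel
  rw [e2']
  rw [smul_add, smul_smul, smul_sub]
  have hI : Complex.I * (2*Complex.I) = -2 := by
    linear_combination 2*Complex.I_sq
  rw [hI]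
  module

lemma MRm : imagAdjMat D * Rm D = Rm D * imagAdjMat D - (2:ℂ) • Rm D := by
  have h1 := commMA (D := D)
  have h2 := commMAs (D := D)
  have e1 : imagAdjMat D * adjMat D
      = adjMat D * imagAdjMat D + (2*Complex.I) • dualAdjMat D := by
    rw [← h1]; abel
  have e2' : imagAdjMat D * dualAdjMat D
      = dualAdjMat D * imagAdjMat D - (2*Complex.I) • adjMat D := by
    rw [← h2]; abel
  unfold Rm
  rw [Matrix.mul_add, Matrix.add_mul, Matrix.mul_smul, Matrix.smul_mul, e1, e2']
  rw [smul_add, smul_smul]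
  have hI : Complex.I * (2*Complex.I) = -2 := by
    linear_combination 2*Complex.I_sq
  rw [hI]
  module

lemma RpRm : Rp D * Rm D = Rm D * Rp D + (4:ℂ) • imagAdjMat D := by
  have hb := comm_base (D := D)
  have e : adjMat D * dualAdjMat D
      = dualAdjMat D * adjMat D + (2*Complex.I) • imagAdjMat D := by
    rw [← hb]; abel
  unfold Rp Rm
  simp only [Matrix.mul_add, Matrix.add_mul, Matrix.mul_sub, Matrix.sub_mul,
    Matrix.mul_smul, Matrix.smul_mul]
  rw [e]
  simp only [smul_add, smul_sub, smul_smul]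
  have hI : Complex.I * (2*Complex.I) = -2 := by
    linear_combination 2*Complex.I_sq
  rw [hI]
  module

lemma conj_aeval (X : Matrix (Vtx D) (Vtx D) ℂ) (p : Polynomial ℂ) :
    Qmat D * (Polynomial.aeval X p) * Pmat D
      = Polynomial.aeval (Qmat D * X * Pmat D) p := by
  induction p using Polynomial.induction_on with
  | C a =>
      simp only [Polynomial.aeval_C, Algebra.algebraMap_eq_smul_one]
      rw [Matrix.mul_smul, Matrix.smul_mul, mul_one, QP]
  | add p q hp hq =>
      simp only [map_add]
      rw [Matrix.mul_add, Matrix.add_mul, hp, hq]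
  | monomial n a ih =>
      have hsplit : (Polynomial.C a * Polynomial.X ^ (n+1) : Polynomial ℂ)
          = (Polynomial.C a * Polynomial.X ^ n) * Polynomial.X := by ring
      rw [hsplit, _root_.map_mul, _root_.map_mul (Polynomial.aeval (Qmat D * X * Pmat D)),
        Polynomial.aeval_X, Polynomial.aeval_X, ← ih, ← conj_mul]

lemma aeval_diagonal (d : Vtx D → ℂ) (p : Polynomial ℂ) :
    Polynomial.aeval (Matrix.diagonal d) p
      = Matrix.diagonal (fun y => p.eval (d y)) := by
  induction p using Polynomial.induction_on with
  | C a =>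
      simp only [Polynomial.aeval_C, Polynomial.eval_C, Algebra.algebraMap_eq_smul_one]
      ext y z
      by_cases h : y = z <;> simp [h, Matrix.one_apply, Matrix.diagonal_apply]
  | add p q hp hq =>
      simp only [map_add, hp, hq, Polynomial.eval_add, Matrix.diagonal_add]
  | monomial n a ih =>
      have hsplit : (Polynomial.C a * Polynomial.X ^ (n+1) : Polynomial ℂ)
          = (Polynomial.C a * Polynomial.X ^ n) * Polynomial.X := by ring
      rw [hsplit, _root_.map_mul, Polynomial.aeval_X, ih, Matrix.diagonal_mul_diagonal]
      congr 1
      funext y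
      simp [Polynomial.eval_mul]

def qpoly (D : ℕ) : Polynomial ℂ :=
  ∏ j ∈ Finset.range (D+1), (Polynomial.X - Polynomial.C (theta D j))

lemma qpoly_dual : Polynomial.aeval (dualAdjMat D) (qpoly D) = 0 := by
  unfold dualAdjMat
  rw [aeval_diagonal]
  have : ∀ y : Vtx D, (qpoly D).eval ((D : ℂ) - 2 * (wt y : ℂ)) = 0 := by
    intro y
    unfold qpoly
    rw [Polynomial.eval_prod]
    apply Finset.prod_eq_zero (Finset.mem_range.mpr (Nat.lt_succ_of_le (wt_le y)))
    simp [theta]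
  simp only [this]
  exact Matrix.diagonal_zero

lemma qpoly_adj : Polynomial.aeval (adjMat D) (qpoly D) = 0 := by
  rw [← conjAs, ← conj_aeval, qpoly_dual, mul_zero, zero_mul]

lemma qpoly_imag : Polynomial.aeval (imagAdjMat D) (qpoly D) = 0 := by
  rw [← conjA, ← conj_aeval, qpoly_adj, mul_zero, zero_mul]

lemma aeval_mulVec_eig (p : Polynomial ℂ) (c : ℂ) (u : Vtx D → ℂ)
    (hu : (imagAdjMat D).mulVec u = c • u) :
    (Polynomial.aeval (imagAdjMat D) p).mulVec u = (p.eval c) • u := by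
  induction p using Polynomial.induction_on with
  | C a =>
      simp only [Polynomial.aeval_C, Polynomial.eval_C]
      rw [Algebra.algebraMap_eq_smul_one, Matrix.smul_mulVec, Matrix.one_mulVec]
  | add p q hp hq =>
      simp only [map_add, Polynomial.eval_add, Matrix.add_mulVec, hp, hq, add_smul]
  | monomial n a ih =>
      have hsplit : (Polynomial.C a * Polynomial.X ^ (n+1) : Polynomial ℂ)
          = Polynomial.X * (Polynomial.C a * Polynomial.X ^ n) := by ring
      rw [hsplit, _root_.map_mul, Polynomial.aeval_X, ← Matrix.mulVec_mulVec, ih,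
        Matrix.mulVec_smul, hu, smul_smul]
      congr 1
      simp [Polynomial.eval_mul]
      ring

lemma eig_theta (c : ℂ) (u : Vtx D → ℂ) (hu : (imagAdjMat D).mulVec u = c • u)
    (hne : u ≠ 0) : ∃ j, j ≤ D ∧ c = theta D j := by
  have h0 : ((qpoly D).eval c) • u = 0 := by
    rw [← aeval_mulVec_eig (qpoly D) c u hu, qpoly_imag, Matrix.zero_mulVec]
  have hev : (qpoly D).eval c = 0 := by
    rcases smul_eq_zero.mp h0 with h | h
    · exact h
    · exact absurd h hne
  unfold qpoly at hev
  rw [Polynomial.eval_prod] at hev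
  obtain ⟨j, hj, hj0⟩ := Finset.prod_eq_zero_iff.mp hev
  refine ⟨j, Nat.lt_succ_iff.mp (Finset.mem_range.mp hj), ?_⟩
  simpa [sub_eq_zero] using hj0

lemma theta_inj {j j' : ℕ} (h : theta D j = theta D j') : j = j' := by
  unfold theta at h
  have : (j : ℂ) = (j' : ℂ) := by linear_combination -h/2
  exact_mod_cast this

lemma exists_transition {V : Type*} [AddCommGroup V] (f : ℕ → V) (N : ℕ)
    (h0 : f 0 ≠ 0) (hN : f N = 0) : ∃ m, f m ≠ 0 ∧ f (m+1) = 0 := by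
  induction N with
  | zero => exact absurd hN h0
  | succ n ih =>
      by_cases h : f n = 0
      · exact ih h
      · exact ⟨n, h, hN⟩

lemma raise_eig (c : ℂ) (x : Vtx D → ℂ) (hx : (imagAdjMat D).mulVec x = c • x) :
    (imagAdjMat D).mulVec ((Rp D).mulVec x) = (c + 2) • ((Rp D).mulVec x) := by
  rw [Matrix.mulVec_mulVec, MRp, Matrix.add_mulVec, ← Matrix.mulVec_mulVec, hx,
    Matrix.mulVec_smul, Matrix.smul_mulVec, ← add_smul]

lemma lower_eig (c : ℂ) (x : Vtx D → ℂ) (hx : (imagAdjMat D).mulVec x = c • x) :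
    (imagAdjMat D).mulVec ((Rm D).mulVec x) = (c - 2) • ((Rm D).mulVec x) := by
  rw [Matrix.mulVec_mulVec, MRm, Matrix.sub_mulVec, ← Matrix.mulVec_mulVec, hx,
    Matrix.mulVec_smul, Matrix.smul_mulVec, ← sub_smul]

lemma Rm_sub_Rp : Rm D - Rp D = (2*Complex.I) • adjMat D := by
  unfold Rm Rp
  have : (2*Complex.I) • adjMat D = Complex.I • adjMat D + Complex.I • adjMat D := by
    rw [← add_smul]; ring_nf
  rw [this]; abel

lemma Rm_add_Rp : Rm D + Rp D = (2:ℂ) • dualAdjMat D := by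
  unfold Rm Rp
  rw [two_smul]; abel

end HC

open HC Polynomial in
/-- For an irreducible `T`-module `W`, `dim(Eᵉ_i W) ≤ 1` for `0 ≤ i ≤ D`. -/
theorem dim_EepsMat_image_le_one (D : ℕ) (hD : 0 < D)
    (W : Submodule ℂ (Vtx D → ℂ)) (hW : IsIrredTMod D W) (i : ℕ) (hi : i ≤ D) :
    Module.finrank ℂ (Submodule.map (EepsMat D i).mulVecLin W) ≤ 1 := by
  classical
  obtain ⟨⟨hA, hAs⟩, hWne, hirr⟩ := hW
  -- closure of W under the relevant operators
  have hM : ∀ w ∈ W, (imagAdjMat D).mulVec w ∈ W := by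
    intro w hw
    unfold imagAdjMat
    rw [Matrix.smul_mulVec, Matrix.sub_mulVec, ← Matrix.mulVec_mulVec,
      ← Matrix.mulVec_mulVec]
    exact W.smul_mem _ (W.sub_mem (hA _ (hAs _ hw)) (hAs _ (hA _ hw)))
  have hRpW : ∀ w ∈ W, (Rp D).mulVec w ∈ W := by
    intro w hw
    unfold Rp
    rw [Matrix.sub_mulVec, Matrix.smul_mulVec]
    exact W.sub_mem (hAs _ hw) (W.smul_mem _ (hA _ hw))
  have hRmW : ∀ w ∈ W, (Rm D).mulVec w ∈ W := by
    intro w hw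
    unfold Rm
    rw [Matrix.add_mulVec, Matrix.smul_mulVec]
    exact W.add_mem (hAs _ hw) (W.smul_mem _ (hA _ hw))
  have haev : ∀ p : Polynomial ℂ, ∀ w ∈ W,
      (Polynomial.aeval (imagAdjMat D) p).mulVec w ∈ W := by
    intro p
    induction p using Polynomial.induction_on with
    | C a =>
        intro w hw
        simp only [Polynomial.aeval_C, Algebra.algebraMap_eq_smul_one]
        rw [Matrix.smul_mulVec, Matrix.one_mulVec]
        exact W.smul_mem _ hw
    | add p q hp hq =>
        intro w hw
        rw [map_add, Matrix.add_mulVec]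
        exact W.add_mem (hp w hw) (hq w hw)
    | monomial n a ih =>
        intro w hw
        rw [show (Polynomial.C a * Polynomial.X ^ (n+1) : Polynomial ℂ)
            = Polynomial.X * (Polynomial.C a * Polynomial.X ^ n) by ring,
          _root_.map_mul, Polynomial.aeval_X, ← Matrix.mulVec_mulVec]
        exact hM _ (ih w hw)
  -- an eigenvector of M inside W
  obtain ⟨w₀, hw₀W, hw₀⟩ := (Submodule.ne_bot_iff W).mp hWne
  set useq : ℕ → Vtx D → ℂ := fun k =>
    (Polynomial.aeval (imagAdjMat D)
      (∏ j ∈ Finset.range k, (Polynomial.X - Polynomial.C (theta D j)))).mulVec w₀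
    with huseq
  have hu0 : useq 0 = w₀ := by
    rw [huseq]
    simp [Matrix.one_mulVec]
  have huN : useq (D+1) = 0 := by
    rw [huseq]
    simp only
    rw [show (∏ j ∈ Finset.range (D+1), (Polynomial.X - Polynomial.C (theta D j)))
      = qpoly D from rfl, qpoly_imag, Matrix.zero_mulVec]
  have hustep : ∀ k, useq (k+1)
      = (imagAdjMat D).mulVec (useq k) - theta D k • useq k := by
    intro k
    rw [huseq]
    simp only
    rw [Finset.prod_range_succ, mul_comm, _root_.map_mul, ← Matrix.mulVec_mulVec,
      map_sub, Polynomial.aeval_X, Polynomial.aeval_C, Algebra.algebraMap_eq_smul_one,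
      Matrix.sub_mulVec, Matrix.smul_mulVec, Matrix.one_mulVec]
  obtain ⟨m, hum_ne, hum1⟩ := exists_transition useq (D+1) (hu0 ▸ hw₀) huN
  have humW : useq m ∈ W := haev _ _ hw₀W
  have humeig : (imagAdjMat D).mulVec (useq m) = theta D m • useq m := by
    have h1 := hustep m
    rw [hum1] at h1
    exact (sub_eq_zero.mp h1.symm)
  -- raise to a highest-weight vector
  set gseq : ℕ → Vtx D → ℂ := fun k => ((Rp D)^k).mulVec (useq m) with hgseq
  have hg0 : gseq 0 = useq m := by rw [hgseq]; simp [Matrix.one_mulVec]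
  have hgstep : ∀ k, gseq (k+1) = (Rp D).mulVec (gseq k) := by
    intro k
    rw [hgseq]
    simp only
    rw [pow_succ', ← Matrix.mulVec_mulVec]
  have hgeig : ∀ k, (imagAdjMat D).mulVec (gseq k)
      = (theta D m + 2*(k:ℂ)) • gseq k := by
    intro k
    induction k with
    | zero => rw [hg0]; simpa using humeig
    | succ n ih =>
        rw [hgstep n, raise_eig _ _ ih]
        congr 1
        push_cast
        ring
  have hgW : ∀ k, gseq k ∈ W := by
    intro k
    induction k with
    | zero => rw [hg0]; exact humW
    | succ n ih => rw [hgstep n]; exact hRpW _ ih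
  have hgtop : gseq (D+1) = 0 := by
    by_contra hne
    obtain ⟨j, hjD, hj⟩ := eig_theta _ _ (hgeig (D+1)) hne
    unfold theta at hj
    have hcast : (j:ℂ) + ((D:ℂ)+1) = (m:ℂ) := by
      push_cast at hj ⊢
      linear_combination hj/2
    have hj' : j + (D+1) = m := by exact_mod_cast hcast
    -- but m ≤ D since theta D m is an eigenvalue of a nonzero vector
    obtain ⟨t, htD, htm⟩ := eig_theta _ _ humeig hum_ne
    have := theta_inj htm
    omega
  obtain ⟨m', hv_ne, hvtop⟩ := exists_transition gseq (D+1)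
    (by rw [hg0]; exact hum_ne) hgtop
  have hvW : gseq m' ∈ W := hgW m'
  have hvRp : (Rp D).mulVec (gseq m') = 0 := by rw [← hgstep m']; exact hvtop
  obtain ⟨s, hsD, hsv⟩ := eig_theta _ _ (hgeig m') hv_ne
  have hveig : (imagAdjMat D).mulVec (gseq m') = theta D s • gseq m' := by
    rw [hgeig m', hsv]
  -- the lowering chain
  set hseq : ℕ → Vtx D → ℂ := fun k => ((Rm D)^k).mulVec (gseq m') with hhseq
  have hh0 : hseq 0 = gseq m' := by rw [hhseq]; simp [Matrix.one_mulVec]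
  have hhstep : ∀ k, hseq (k+1) = (Rm D).mulVec (hseq k) := by
    intro k
    rw [hhseq]
    simp only
    rw [pow_succ', ← Matrix.mulVec_mulVec]
  have hheig : ∀ k, (imagAdjMat D).mulVec (hseq k)
      = (theta D s - 2*(k:ℂ)) • hseq k := by
    intro k
    induction k with
    | zero => rw [hh0]; simpa using hveig
    | succ n ih =>
        rw [hhstep n, lower_eig _ _ ih]
        congr 1
        push_cast
        ring
  have hhW : ∀ k, hseq k ∈ W := by
    intro k
    induction k with
    | zero => rw [hh0]; exact hvW
    | succ n ih => rw [hhstep n]; exact hRmW _ ih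
  have hhRp : ∀ k, ∃ c : ℂ, (Rp D).mulVec (hseq (k+1)) = c • hseq k := by
    intro k
    induction k with
    | zero =>
        refine ⟨4 * theta D s, ?_⟩
        rw [hhstep 0, hh0, Matrix.mulVec_mulVec, RpRm, Matrix.add_mulVec,
          ← Matrix.mulVec_mulVec, hvRp, Matrix.mulVec_zero, zero_add,
          Matrix.smul_mulVec, hveig, smul_smul]
    | succ n ih =>
        obtain ⟨c, hc⟩ := ih
        refine ⟨c + 4*(theta D s - 2*((n:ℂ)+1)), ?_⟩
        rw [hhstep (n+1), Matrix.mulVec_mulVec, RpRm, Matrix.add_mulVec,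
          ← Matrix.mulVec_mulVec, hc, Matrix.mulVec_smul, ← hhstep n,
          Matrix.smul_mulVec, hheig (n+1), smul_smul, ← add_smul]
        congr 2
        push_cast
        ring
  -- the span of the chain is a T-module
  set U := Submodule.span ℂ (Set.range hseq) with hU
  have hhU : ∀ k, hseq k ∈ U := fun k => Submodule.subset_span ⟨k, rfl⟩
  have hUW : U ≤ W := Submodule.span_le.mpr (by rintro _ ⟨k, rfl⟩; exact hhW k)
  have hclose : ∀ (X : Matrix (Vtx D) (Vtx D) ℂ), (∀ k, X.mulVec (hseq k) ∈ U) →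
      ∀ w ∈ U, X.mulVec w ∈ U := by
    intro X hX w hw
    induction hw using Submodule.span_induction with
    | mem x hx => obtain ⟨k, rfl⟩ := hx; exact hX k
    | zero => rw [Matrix.mulVec_zero]; exact U.zero_mem
    | add x y hx hy ihx ihy => rw [Matrix.mulVec_add]; exact U.add_mem ihx ihy
    | smul a x hx ihx => rw [Matrix.mulVec_smul]; exact U.smul_mem a ihx
  have hRmU : ∀ w ∈ U, (Rm D).mulVec w ∈ U :=
    hclose _ (fun k => by rw [← hhstep k]; exact hhU (k+1))
  have hRpU : ∀ w ∈ U, (Rp D).mulVec w ∈ U := by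
    refine hclose _ (fun k => ?_)
    cases k with
    | zero => rw [hh0, hvRp]; exact U.zero_mem
    | succ n =>
        obtain ⟨c, hc⟩ := hhRp n
        rw [hc]
        exact U.smul_mem _ (hhU n)
  have hAU : ∀ w ∈ U, (adjMat D).mulVec w ∈ U := by
    intro w hw
    have h2I : (2*Complex.I : ℂ) ≠ 0 := by simp [Complex.I_ne_zero]
    have hexp : (adjMat D).mulVec w
        = ((2*Complex.I)⁻¹) • ((Rm D).mulVec w - (Rp D).mulVec w) := by
      rw [← Matrix.sub_mulVec, Rm_sub_Rp, Matrix.smul_mulVec, smul_smul,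
        inv_mul_cancel₀ h2I, one_smul]
    rw [hexp]
    exact U.smul_mem _ (U.sub_mem (hRmU w hw) (hRpU w hw))
  have hAsU : ∀ w ∈ U, (dualAdjMat D).mulVec w ∈ U := by
    intro w hw
    have hexp : (dualAdjMat D).mulVec w
        = ((2:ℂ)⁻¹) • ((Rm D).mulVec w + (Rp D).mulVec w) := by
      rw [← Matrix.add_mulVec, Rm_add_Rp, Matrix.smul_mulVec, smul_smul]
      norm_num
    rw [hexp]
    exact U.smul_mem _ (U.add_mem (hRmU w hw) (hRpU w hw))
  have hUne : U ≠ ⊥ := (Submodule.ne_bot_iff U).mpr ⟨gseq m', hh0 ▸ hhU 0, hv_ne⟩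
  have hUeq : U = W := (hirr U ⟨hAU, hAsU⟩ hUW).resolve_left hUne
  -- EepsMat as a polynomial in M
  set f := (∏ j ∈ (Finset.range (D + 1)).erase i,
      Polynomial.C ((theta D i - theta D j)⁻¹)
        * (Polynomial.X - Polynomial.C (theta D j))) with hf
  have hE : EepsMat D i = Polynomial.aeval (imagAdjMat D) f := by
    unfold EepsMat
    rw [Pinv, show Emat D i = Polynomial.aeval (adjMat D) f from rfl,
      conj_aeval, conjA]
  rw [← hUeq, hE]
  -- the image lies in the span of a single vector
  have hmap : Submodule.map (Polynomial.aeval (imagAdjMat D) f).mulVecLin U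
      ≤ Submodule.span ℂ {hseq (i - s)} := by
    rw [hU, Submodule.map_span]
    apply Submodule.span_le.mpr
    rintro _ ⟨_, ⟨k, rfl⟩, rfl⟩
    rw [Matrix.mulVecLin_apply]
    by_cases hk0 : hseq k = 0
    · rw [hk0, Matrix.mulVec_zero]; exact Submodule.zero_mem _
    · obtain ⟨j, hjD, hj⟩ := eig_theta _ _ (hheig k) hk0
      have hjsk : j = s + k := by
        unfold theta at hj
        have hcast : (j:ℂ) = (s:ℂ) + (k:ℂ) := by
          push_cast at hj ⊢
          linear_combination hj/2
        exact_mod_cast hcast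
      rw [aeval_mulVec_eig f _ _ (hheig k)]
      by_cases hsk : s + k = i
      · have hk : k = i - s := by omega
        rw [hk]
        exact Submodule.smul_mem _ _ (Submodule.subset_span rfl)
      · have hzero : f.eval (theta D s - 2*(k:ℂ)) = 0 := by
          have hθ : theta D s - 2*(k:ℂ) = theta D (s+k) := by
            unfold theta; push_cast; ring
          rw [hθ, hf, Polynomial.eval_prod]
          apply Finset.prod_eq_zero (i := s+k)
          · rw [Finset.mem_erase]
            exact ⟨hsk, Finset.mem_range.mpr (by omega)⟩
          · simp only [Polynomial.eval_mul, Polynomial.eval_sub, Polynomial.eval_X,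
              Polynomial.eval_C, sub_self, mul_zero]
        rw [hzero, zero_smul]
        exact Submodule.zero_mem _
  have hfin : Module.finrank ℂ (Submodule.span ℂ {hseq (i - s)}) ≤ 1 := by
    by_cases hz : hseq (i - s) = 0
    · rw [hz, Submodule.span_zero_singleton]
      simp
    · rw [finrank_span_singleton hz]
  exact le_trans (Submodule.finrank_mono hmap) hfin
end
end
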